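/- arXiv:0811.3390 — 8 statements merged into one kernel-verified Lean document; each statement's English description precedes it below -/
import Mathlib

section
/- Let a and b be coprime integers with 0 < a < b and let β ∈ ℂ. Fix j ∈ {0,1,…,b−1} and assume (β − ja)/b ∉ ℕ. Define c_m = ((β − ja)/b)_{am} · j! / (j + bm)! for m ∈ ℕ. Then c_m ≠ 0 for every m, the ratio |c_{m+1}/c_m| tends to 0 as m → ∞, and consequently the power series Σ_{m≥0} c_m z^m converges absolutely for every z ∈ ℂ. -/
open Filter Finset

private lemma descPoch_eval_prod (x : ℂ) (n : ℕ) :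
    (descPochhammer ℂ n).eval x = ∏ k ∈ Finset.range n, (x - (k : ℂ)) := by
  induction n with
  | zero => simp [descPochhammer]
  | succ n ih => rw [descPochhammer_succ_eval, Finset.prod_range_succ, ih]

private lemma factorial_add_prod (n t : ℕ) :
    ((n + t).factorial : ℂ) =
      (n.factorial : ℂ) * ∏ k ∈ Finset.range t, ((n + k + 1 : ℕ) : ℂ) := by
  induction t with
  | zero => simp
  | succ t ih =>
    have h : n + (t + 1) = (n + t) + 1 := by ring
    rw [h, Nat.factorial_succ, Finset.prod_range_succ]
    push_cast
    push_cast at ih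
    rw [ih]; ring

/-- For coprime `0 < a < b`, `β ∈ ℂ`, `j ∈ {0,…,b-1}` with `(β - ja)/b ∉ ℕ`, the coefficients
`c_m = ((β - ja)/b)_{am} · j! / (j + bm)!` of the Γ-series `φ_{v^j}` are all nonzero, the
ratio `|c_{m+1}/c_m|` tends to `0`, and `Σ c_m z^m` converges absolutely for every `z ∈ ℂ`. -/
theorem gamma_series_generic_point_converges
    (a b : ℕ) (hab : Nat.Coprime a b) (ha : 0 < a) (haltb : a < b)
    (β : ℂ) (j : ℕ) (hj : j < b)
    (hβ : ∀ n : ℕ, (β - (j : ℂ) * (a : ℂ)) / (b : ℂ) ≠ (n : ℂ))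
    (c : ℕ → ℂ)
    (hc : ∀ m : ℕ, c m =
      (descPochhammer ℂ (a * m)).eval ((β - (j : ℂ) * (a : ℂ)) / (b : ℂ))
        * (j.factorial : ℂ) / ((j + b * m).factorial : ℂ)) :
    (∀ m : ℕ, c m ≠ 0) ∧
    Filter.Tendsto (fun m : ℕ => ‖c (m + 1) / c m‖) Filter.atTop (nhds 0) ∧
    ∀ z : ℂ, Summable fun m : ℕ => ‖c m * z ^ m‖ := by
  set x : ℂ := (β - (j : ℂ) * (a : ℂ)) / (b : ℂ) with hxdef
  have hx : ∀ k : ℕ, x - (k : ℂ) ≠ 0 := fun k => sub_ne_zero.mpr (hβ k)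
  have hP : ∀ n : ℕ, (descPochhammer ℂ n).eval x ≠ 0 := by
    intro n
    rw [descPoch_eval_prod]
    exact Finset.prod_ne_zero_iff.mpr fun k _ => hx k
  have hfac : ∀ n : ℕ, ((n.factorial : ℂ)) ≠ 0 :=
    fun n => Nat.cast_ne_zero.mpr (Nat.factorial_ne_zero n)
  have hc0 : ∀ m : ℕ, c m ≠ 0 := by
    intro m
    rw [hc]
    exact div_ne_zero (mul_ne_zero (hP _) (hfac j)) (hfac _)
  -- ratio formula
  set Q : ℕ → ℂ := fun m => ∏ k ∈ Finset.range a, (x - ((a * m + k : ℕ) : ℂ)) with hQdef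
  set D : ℕ → ℂ := fun m => ∏ k ∈ Finset.range b, ((j + b * m + k + 1 : ℕ) : ℂ) with hDdef
  have hratio : ∀ m : ℕ, c (m + 1) / c m = Q m / D m := by
    intro m
    have h1 : (descPochhammer ℂ (a * (m + 1))).eval x
        = (descPochhammer ℂ (a * m)).eval x * Q m := by
      rw [descPoch_eval_prod, descPoch_eval_prod,
        show a * (m + 1) = a * m + a from by ring, Finset.prod_range_add]
    have h2 : ((j + b * (m + 1)).factorial : ℂ) = ((j + b * m).factorial : ℂ) * D m := by
      rw [show j + b * (m + 1) = (j + b * m) + b from by ring, factorial_add_prod]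
    have hD0 : D m ≠ 0 := by
      rw [hDdef]
      exact Finset.prod_ne_zero_iff.mpr fun k _ => Nat.cast_ne_zero.mpr (by omega)
    have key : ∀ A J F D Q : ℂ, A ≠ 0 → J ≠ 0 → F ≠ 0 → D ≠ 0 →
        (A * Q * J / (F * D)) / (A * J / F) = Q / D := by
      intro A J F D Q hA hJ hF hD
      field_simp
    rw [hc, hc, h1, h2]
    exact key _ _ _ _ _ (hP (a * m)) (hfac j) (hfac (j + b * m)) hD0
  -- bound on the ratio
  set C : ℝ := ‖x‖ + a with hCdef
  have hC0 : 0 ≤ C := by positivity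
  have hbound : ∀ m : ℕ, ‖c (m + 1) / c m‖
      ≤ C ^ a / ((m : ℝ) + 1) ^ (b - a) := by
    intro m
    rw [hratio, norm_div]
    have hQb : ‖Q m‖ ≤ (C * ((m : ℝ) + 1)) ^ a := by
      rw [hQdef]
      calc ‖∏ k ∈ Finset.range a, (x - ((a * m + k : ℕ) : ℂ))‖
          = ∏ k ∈ Finset.range a, ‖x - ((a * m + k : ℕ) : ℂ)‖ := by
            exact norm_prod _ _
        _ ≤ ∏ _k ∈ Finset.range a, (C * ((m : ℝ) + 1)) := by
            apply Finset.prod_le_prod (fun k _ => by positivity)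
            intro k hk
            have hk' : k < a := Finset.mem_range.mp hk
            calc ‖x - ((a * m + k : ℕ) : ℂ)‖
                ≤ ‖x‖ + ‖((a * m + k : ℕ) : ℂ)‖ :=
                  norm_sub_le x _
              _ = ‖x‖ + ((a * m + k : ℕ) : ℝ) := by
                  rw [Complex.norm_natCast]
              _ ≤ C * ((m : ℝ) + 1) := by
                  rw [hCdef]
                  push_cast
                  have : (k : ℝ) ≤ a - 1 := by
                    have := hk'
                    have : (k : ℝ) + 1 ≤ a := by exact_mod_cast hk'
                    linarith
                  nlinarith [norm_nonneg x, Nat.cast_nonneg (α := ℝ) m,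
                    Nat.cast_nonneg (α := ℝ) a]
        _ = (C * ((m : ℝ) + 1)) ^ a := by rw [Finset.prod_const, Finset.card_range]
    have hDb : ((m : ℝ) + 1) ^ b ≤ ‖D m‖ := by
      rw [hDdef]
      have : ‖∏ k ∈ Finset.range b, ((j + b * m + k + 1 : ℕ) : ℂ)‖
          = ∏ k ∈ Finset.range b, ((j + b * m + k + 1 : ℕ) : ℝ) := by
        rw [norm_prod]
        exact Finset.prod_congr rfl fun k _ => Complex.norm_natCast _
      rw [this]
      calc ((m : ℝ) + 1) ^ b = ∏ _k ∈ Finset.range b, ((m : ℝ) + 1) := by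
            rw [Finset.prod_const, Finset.card_range]
        _ ≤ ∏ k ∈ Finset.range b, ((j + b * m + k + 1 : ℕ) : ℝ) := by
            apply Finset.prod_le_prod (fun k _ => by positivity)
            intro k _
            have : m + 1 ≤ j + b * m + k + 1 := by nlinarith [Nat.one_le_iff_ne_zero.mpr (by omega : b ≠ 0)]
            calc (m : ℝ) + 1 = ((m + 1 : ℕ) : ℝ) := by push_cast; ring
              _ ≤ ((j + b * m + k + 1 : ℕ) : ℝ) := by exact_mod_cast this
    have hmp : (0 : ℝ) < ((m : ℝ) + 1) ^ b := by positivity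
    calc ‖Q m‖ / ‖D m‖
        ≤ (C * ((m : ℝ) + 1)) ^ a / ((m : ℝ) + 1) ^ b :=
          div_le_div₀ (by positivity) hQb hmp hDb
      _ = C ^ a / ((m : ℝ) + 1) ^ (b - a) := by
          have hsplit : ((m : ℝ) + 1) ^ b = ((m : ℝ) + 1) ^ (b - a) * ((m : ℝ) + 1) ^ a := by
            rw [← pow_add]
            congr 1
            omega
          rw [mul_pow, hsplit, mul_div_mul_right _ _ (by positivity : ((m : ℝ) + 1) ^ a ≠ 0)]
  have htend : Tendsto (fun m : ℕ => ‖c (m + 1) / c m‖) atTop (nhds 0) := by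
    apply squeeze_zero (fun m => norm_nonneg _) hbound
    apply Tendsto.div_atTop tendsto_const_nhds
    exact (Filter.tendsto_pow_atTop (n := b - a) (by omega)).comp
      (tendsto_atTop_add_const_right atTop (1 : ℝ) tendsto_natCast_atTop_atTop)
  refine ⟨hc0, htend, ?_⟩
  intro z
  rcases eq_or_ne z 0 with hz | hz
  · apply summable_of_ne_finset_zero (s := {0})
    intro m hm
    have hm0 : m ≠ 0 := by simpa using hm
    simp [hz, zero_pow hm0]
  · have hne : ∀ᶠ n in atTop, ‖c n * z ^ n‖ ≠ 0 := by
      apply Filter.Eventually.of_forall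
      intro n
      simp only [ne_eq, norm_eq_zero]
      exact mul_ne_zero (hc0 n) (pow_ne_zero n hz)
    apply summable_of_ratio_test_tendsto_lt_one zero_lt_one hne
    have heq : ∀ n : ℕ, ‖‖c (n + 1) * z ^ (n + 1)‖‖ / ‖‖c n * z ^ n‖‖
        = ‖c (n + 1) / c n‖ * ‖z‖ := by
      intro n
      have key : (c (n + 1) * z ^ (n + 1)) / (c n * z ^ n) = (c (n + 1) / c n) * z := by
        rw [pow_succ, show c (n + 1) * (z ^ n * z) = c (n + 1) * z * z ^ n from by ring,
          mul_div_mul_right _ _ (pow_ne_zero n hz), mul_div_right_comm]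
      rw [Real.norm_eq_abs, Real.norm_eq_abs, abs_of_nonneg (norm_nonneg _),
        abs_of_nonneg (norm_nonneg _), ← norm_div, key, norm_mul]
    have h : Tendsto (fun n : ℕ => ‖c (n + 1) / c n‖ * ‖z‖) atTop
        (nhds (0 * ‖z‖)) := htend.mul_const _
    rw [zero_mul] at h
    exact h.congr fun n => (heq n).symm
end

section
/- Let a and b be coprime integers with 0 < a < b, let β ∈ ℂ, fix k ∈ {0,1,…,a−1}, and let s ≥ b/a be a real number. Define c_m = ((β − bk)/a)_{bm} · k! / (k + am)! for m ∈ ℕ. Then there exist constants C, D > 0 such that |c_m| ≤ C · D^m · ((a·m)!)^{s−1} for all m ∈ ℕ. -/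
lemma aux_choose_le_two_pow (n k : ℕ) : n.choose k ≤ 2 ^ n := by
  rcases le_or_gt k n with h | h
  · calc n.choose k ≤ ∑ m ∈ Finset.range (n+1), n.choose m :=
        Finset.single_le_sum (fun i _ => Nat.zero_le _) (Finset.mem_range.mpr (Nat.lt_succ_of_le h))
    _ = 2 ^ n := Nat.sum_range_choose n
  · rw [Nat.choose_eq_zero_of_lt h]; exact Nat.zero_le _

lemma aux_pow_factorial_dvd (a n : ℕ) : (n.factorial) ^ a ∣ (a * n).factorial := by
  induction a with
  | zero => simp
  | succ a ih =>
    have h1 : n.factorial ^ a * n.factorial ∣ (a * n).factorial * n.factorial :=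
      mul_dvd_mul ih dvd_rfl
    have h2 : (a * n).factorial * n.factorial ∣ (a * n + n).factorial :=
      Nat.factorial_mul_factorial_dvd_factorial_add _ _
    have h3 : (a + 1) * n = a * n + n := by ring
    rw [h3, pow_succ]
    exact h1.trans h2

lemma aux_factorial_mul_le (n : ℕ) : ∀ j : ℕ,
    (j * n).factorial ≤ n.factorial ^ j * (2 ^ n) ^ (j * j) := by
  intro j
  induction j with
  | zero => simp
  | succ j ih =>
    have key : (j * n + n).factorial = (j * n + n).choose n * (j * n).factorial * n.factorial := by
      rw [Nat.add_choose_mul_factorial_mul_factorial]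
    have hchoose : (j * n + n).choose n ≤ 2 ^ (j * n + n) := aux_choose_le_two_pow _ _
    have h1 : (j + 1) * n = j * n + n := by ring
    rw [h1, key]
    calc (j * n + n).choose n * (j * n).factorial * n.factorial
        ≤ 2 ^ (j * n + n) * ((n.factorial ^ j * (2 ^ n) ^ (j * j))) * n.factorial :=
          Nat.mul_le_mul (Nat.mul_le_mul hchoose ih) le_rfl
      _ = n.factorial ^ (j + 1) * (2 ^ n) ^ (j * j + j + 1) := by
          rw [← pow_mul, ← pow_mul]; ring_nf
      _ ≤ n.factorial ^ (j + 1) * (2 ^ n) ^ ((j + 1) * (j + 1)) := by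
          apply Nat.mul_le_mul_left
          apply Nat.pow_le_pow_right (Nat.one_le_two_pow)
          nlinarith

lemma aux_pochhammer_abs_le (z : ℂ) : ∀ n : ℕ,
    ‖(descPochhammer ℂ n).eval z‖ ≤ (‖z‖ + 1) ^ n * n.factorial := by
  intro n
  induction n with
  | zero => simp
  | succ n ih =>
    rw [descPochhammer_succ_eval, norm_mul]
    have h1 : ‖z - (n : ℂ)‖ ≤ (‖z‖ + 1) * (n + 1) := by
      calc ‖z - (n : ℂ)‖ ≤ ‖z‖ + ‖(n : ℂ)‖ :=
            (norm_sub_le z (n : ℂ))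
        _ = ‖z‖ + n := by rw [Complex.norm_natCast]
        _ ≤ (‖z‖ + 1) * (n + 1) := by
            have h := norm_nonneg z; nlinarith
    calc ‖(descPochhammer ℂ n).eval z‖ * ‖z - (n : ℂ)‖
        ≤ ((‖z‖ + 1) ^ n * n.factorial) * ((‖z‖ + 1) * (n + 1)) := by
          apply mul_le_mul ih h1 (norm_nonneg _)
          positivity
      _ = (‖z‖ + 1) ^ (n + 1) * (n + 1).factorial := by
          rw [Nat.factorial_succ]; push_cast; ring

lemma aux_root_step (a b m : ℕ) (ha : 0 < a) (X Y E : ℝ)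
    (hX : 0 ≤ X) (hY : 1 ≤ Y) (hE : 1 ≤ E)
    (h : X ^ a ≤ Y ^ b * E ^ m) : X ≤ Y ^ ((b : ℝ) / (a : ℝ)) * E ^ m := by
  have ha' : (0:ℝ) < a := by positivity
  have hYnn : (0:ℝ) ≤ Y := le_trans zero_le_one hY
  have hEnn : (0:ℝ) ≤ E := le_trans zero_le_one hE
  have h1 : X = (X ^ (a:ℕ)) ^ ((a:ℝ)⁻¹) := by
    rw [← Real.rpow_natCast X a, ← Real.rpow_mul hX, mul_inv_cancel₀ (ne_of_gt ha'),
      Real.rpow_one]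
  rw [h1]
  have h2 : ((X ^ a : ℝ)) ^ ((a:ℝ)⁻¹) ≤ (Y ^ b * E ^ m) ^ ((a:ℝ)⁻¹) :=
    Real.rpow_le_rpow (by positivity) h (by positivity)
  refine h2.trans ?_
  rw [Real.mul_rpow (by positivity) (by positivity),
      ← Real.rpow_natCast Y b, ← Real.rpow_natCast E m,
      ← Real.rpow_mul hYnn, ← Real.rpow_mul hEnn]
  have hba : (b:ℝ) * (a:ℝ)⁻¹ = (b:ℝ) / (a:ℝ) := by rw [div_eq_mul_inv]
  rw [hba]
  have hEp : E ^ ((m:ℝ) * (a:ℝ)⁻¹) ≤ E ^ (m:ℝ) := by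
    apply Real.rpow_le_rpow_of_exponent_le hE
    have h3 : (a:ℝ)⁻¹ ≤ 1 := by
      rw [inv_le_one_iff₀]; right; exact_mod_cast ha
    nlinarith [Nat.cast_nonneg (α := ℝ) m]
  calc Y ^ ((b:ℝ)/(a:ℝ)) * E ^ ((m:ℝ) * (a:ℝ)⁻¹)
      ≤ Y ^ ((b:ℝ)/(a:ℝ)) * E ^ (m:ℝ) := by
        apply mul_le_mul_of_nonneg_left hEp (by positivity)

/-- For coprime `0 < a < b`, `β ∈ ℂ`, `k ∈ {0,…,a-1}` and a real `s ≥ b/a`, the coefficients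
`c_m = ((β - bk)/a)_{bm} · k! / (k + am)!` of the Γ-series `φ_{v^k}` satisfy a Gevrey-type
bound `|c_m| ≤ C · D^m · ((a·m)!)^{s-1}` for some constants `C, D > 0`. -/
theorem gamma_series_coeff_gevrey_bound
    (a b : ℕ) (hab : Nat.Coprime a b) (ha : 0 < a) (haltb : a < b)
    (β : ℂ) (k : ℕ) (hk : k < a) (s : ℝ) (hs : (b : ℝ) / (a : ℝ) ≤ s)
    (c : ℕ → ℂ)
    (hc : ∀ m : ℕ, c m =
      (descPochhammer ℂ (b * m)).eval ((β - (b : ℂ) * (k : ℂ)) / (a : ℂ))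
        * (k.factorial : ℂ) / ((k + a * m).factorial : ℂ)) :
    ∃ C D : ℝ, 0 < C ∧ 0 < D ∧
      ∀ m : ℕ, ‖c m‖ ≤ C * D ^ m * (((a * m).factorial : ℝ)) ^ (s - 1) := by
  set z : ℂ := (β - (b : ℂ) * (k : ℂ)) / (a : ℂ) with hz
  set R : ℝ := ‖z‖ + 1 with hR
  have hR1 : (1:ℝ) ≤ R := by
    have := norm_nonneg z; simp [hR]
  -- the geometric constant
  set En : ℕ := 2 ^ (a * (b * b)) with hEn
  have hEn1 : (1:ℝ) ≤ (En : ℝ) := by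
    exact_mod_cast Nat.one_le_two_pow (n := a * (b * b))
  refine ⟨(k.factorial : ℝ), R ^ b * (En : ℝ), by positivity, by positivity, fun m => ?_⟩
  -- key factorial inequality in ℕ
  have hnat : ((b * m).factorial) ^ a ≤ ((a * m).factorial) ^ b * En ^ m := by
    have h1 : ((b * m).factorial) ^ a ≤ (a * (b * m)).factorial :=
      Nat.le_of_dvd (Nat.factorial_pos _) (aux_pow_factorial_dvd a (b * m))
    have h2 : (b * (a * m)).factorial ≤ ((a * m).factorial) ^ b * (2 ^ (a * m)) ^ (b * b) :=
      aux_factorial_mul_le (a * m) b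
    have h3 : a * (b * m) = b * (a * m) := by ring
    have h4 : (2 ^ (a * m)) ^ (b * b) = En ^ m := by
      rw [hEn, ← pow_mul, ← pow_mul]; ring_nf
    rw [h3] at h1
    rw [h4] at h2
    exact h1.trans h2
  -- cast to ℝ and take a-th root
  have hfac1 : (1:ℝ) ≤ ((a * m).factorial : ℝ) := by
    exact_mod_cast Nat.one_le_iff_ne_zero.mpr (Nat.factorial_ne_zero _)
  have hroot : ((b * m).factorial : ℝ) ≤
      ((a * m).factorial : ℝ) ^ ((b : ℝ) / (a : ℝ)) * (En : ℝ) ^ m := by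
    apply aux_root_step a b m ha _ _ _ (by positivity) hfac1 hEn1
    exact_mod_cast hnat
  -- bound on the Pochhammer symbol
  have hpoch : ‖(descPochhammer ℂ (b * m)).eval z‖ ≤ R ^ (b * m) * (b * m).factorial :=
    aux_pochhammer_abs_le z (b * m)
  -- denominator bound
  have hden : ((a * m).factorial : ℝ) ≤ ((k + a * m).factorial : ℝ) := by
    exact_mod_cast Nat.factorial_le (Nat.le_add_left _ _)
  have hdenpos : (0:ℝ) < ((k + a * m).factorial : ℝ) := by
    exact_mod_cast Nat.factorial_pos _
  have hfacpos : (0:ℝ) < ((a * m).factorial : ℝ) := by linarith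
  -- compute |c m|
  have habs : ‖c m‖ =
      ‖(descPochhammer ℂ (b * m)).eval z‖ * (k.factorial : ℝ)
        / ((k + a * m).factorial : ℝ) := by
    rw [hc m, norm_div, norm_mul, Complex.norm_natCast, Complex.norm_natCast]
  rw [habs]
  have step1 : ‖(descPochhammer ℂ (b * m)).eval z‖ * (k.factorial : ℝ)
        / ((k + a * m).factorial : ℝ)
      ≤ (R ^ (b * m) * ((b * m).factorial : ℝ)) * (k.factorial : ℝ)
        / ((a * m).factorial : ℝ) := by
    apply div_le_div₀ (by positivity) _ hfacpos hden
    apply mul_le_mul_of_nonneg_right hpoch (by positivity)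
  refine step1.trans ?_
  have step2 : (R ^ (b * m) * ((b * m).factorial : ℝ)) * (k.factorial : ℝ)
        / ((a * m).factorial : ℝ)
      ≤ (R ^ (b * m) * (((a * m).factorial : ℝ) ^ ((b : ℝ) / (a : ℝ)) * (En : ℝ) ^ m))
          * (k.factorial : ℝ) / ((a * m).factorial : ℝ) := by
    apply div_le_div₀ (by positivity) _ hfacpos le_rfl
    apply mul_le_mul_of_nonneg_right _ (by positivity)
    exact mul_le_mul_of_nonneg_left hroot (by positivity)
  refine step2.trans ?_
  -- now rearrange into target form
  have hrw : (R ^ (b * m) * (((a * m).factorial : ℝ) ^ ((b : ℝ) / (a : ℝ)) * (En : ℝ) ^ m))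
        * (k.factorial : ℝ) / ((a * m).factorial : ℝ)
      = (k.factorial : ℝ) * (R ^ b * (En : ℝ)) ^ m
          * ((a * m).factorial : ℝ) ^ ((b : ℝ) / (a : ℝ) - 1) := by
    rw [Real.rpow_sub hfacpos, Real.rpow_one, pow_mul, mul_pow]
    field_simp
  rw [hrw]
  apply mul_le_mul_of_nonneg_left _ (by positivity)
  exact Real.rpow_le_rpow_of_exponent_le hfac1 (by linarith)
end

section
/- Let a and b be coprime integers with 0 < a < b, let β ∈ ℂ, fix k ∈ {0,1,…,a−1} with (β − bk)/a ∉ ℕ, and let s be a real number with 1 ≤ s < b/a. Define c_m = ((β − bk)/a)_{bm} · k! / (k + am)! for m ∈ ℕ. Then for all C, D > 0 there exists m ∈ ℕ with |c_m| > C · D^m · ((a·m)!)^{s−1}. (Hence the Gevrey index of the Γ-series φ_{v^k} along x₂ = 0 at a point (ε,0) with ε ≠ 0 is exactly b/a.) -/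
lemma aux_descPoch_prod (r : ℂ) (n : ℕ) :
    (descPochhammer ℂ n).eval r = ∏ i ∈ Finset.range n, (r - i) := by
  induction n with
  | zero => simp
  | succ n ih => rw [descPochhammer_succ_eval, ih, Finset.prod_range_succ]

lemma aux_fact_le (n N : ℕ) (h : N ≤ n) : n.factorial ≤ (n - N).factorial * n ^ N := by
  induction N with
  | zero => simp
  | succ N ih =>
    have hN : N ≤ n := le_of_lt (Nat.lt_of_succ_le h)
    have h1 : n - N = (n - (N + 1)) + 1 := by omega
    calc n.factorial ≤ (n - N).factorial * n ^ N := ih hN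
      _ = (n - N) * (n - (N+1)).factorial * n ^ N := by
          rw [h1, Nat.factorial_succ]
      _ ≤ n * (n - (N+1)).factorial * n ^ N := by
          have : n - N ≤ n := Nat.sub_le _ _
          exact Nat.mul_le_mul_right _ (Nat.mul_le_mul_right _ this)
      _ = (n - (N+1)).factorial * n ^ (N+1) := by ring

lemma aux_succ_pow (n : ℕ) (hn : 1 ≤ n) : ((n:ℝ) + 1) ^ n ≤ 3 * (n:ℝ) ^ n := by
  have hn0 : (0:ℝ) < n := by exact_mod_cast hn
  have h1 : (n:ℝ) + 1 ≤ n * Real.exp (1/n) := by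
    have h := Real.add_one_le_exp (1/(n:ℝ))
    have := mul_le_mul_of_nonneg_left h (le_of_lt hn0)
    have hne : (n:ℝ) ≠ 0 := ne_of_gt hn0
    rw [mul_add, mul_one, mul_one_div, div_self hne] at this
    linarith
  have h2 : ((n:ℝ) + 1) ^ n ≤ ((n:ℝ) * Real.exp (1/n)) ^ n :=
    pow_le_pow_left₀ (by positivity) h1 n
  have h3 : ((n:ℝ) * Real.exp (1/n)) ^ n = (n:ℝ)^n * Real.exp 1 := by
    rw [mul_pow, ← Real.exp_nat_mul]
    congr 2
    field_simp
  have h4 : Real.exp 1 ≤ 3 := by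
    have := Real.exp_one_lt_d9
    linarith
  calc ((n:ℝ) + 1) ^ n ≤ (n:ℝ)^n * Real.exp 1 := by rw [← h3]; exact h2
    _ ≤ (n:ℝ)^n * 3 := mul_le_mul_of_nonneg_left h4 (by positivity)
    _ = 3 * (n:ℝ)^n := by ring

lemma aux_pow_le_fact (n : ℕ) : (n:ℝ) ^ n ≤ 3 ^ n * (n.factorial : ℝ) := by
  induction n with
  | zero => simp
  | succ n ih =>
    rcases Nat.eq_zero_or_pos n with h0 | h1
    · subst h0; norm_num
    · have key : ((n:ℝ) + 1) ^ n ≤ 3 * (n:ℝ) ^ n := aux_succ_pow n h1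
      have he : ((n+1:ℕ):ℝ) ^ (n+1) = ((n:ℝ)+1) * ((n:ℝ)+1)^n := by
        push_cast; ring
      rw [he]
      calc ((n:ℝ)+1) * ((n:ℝ)+1)^n ≤ ((n:ℝ)+1) * (3 * (n:ℝ)^n) :=
            mul_le_mul_of_nonneg_left key (by positivity)
        _ ≤ ((n:ℝ)+1) * (3 * (3^n * n.factorial)) := by
            have := mul_le_mul_of_nonneg_left ih (by norm_num : (0:ℝ) ≤ 3)
            exact mul_le_mul_of_nonneg_left this (by positivity)
        _ = 3 ^ (n+1) * (((n:ℝ)+1) * n.factorial) := by ring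
        _ = 3 ^ (n+1) * ((n+1).factorial : ℝ) := by
            rw [Nat.factorial_succ]; push_cast; ring

lemma aux_poch_lower (G : ℂ) (N : ℕ) (hA : ‖G‖ + 1 ≤ N) (n : ℕ) (hn : N ≤ n) :
    (∏ j ∈ Finset.range N, ‖G - j‖) * ((n - N).factorial : ℝ)
      ≤ ‖(descPochhammer ℂ n).eval G‖ := by
  rw [aux_descPoch_prod, norm_prod, ← Finset.prod_range_mul_prod_Ico _ hn]
  have hfac : ((n - N).factorial : ℝ) = ∏ i ∈ Finset.Ico N n, ((i:ℝ) - N + 1) := by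
    rw [Finset.prod_Ico_eq_prod_range]
    have h : ∀ i ∈ Finset.range (n - N), ((N + i : ℕ):ℝ) - (N:ℝ) + 1 = (i:ℝ) + 1 := by
      intro i _; push_cast; ring
    rw [Finset.prod_congr rfl h, ← Finset.prod_range_add_one_eq_factorial]
    push_cast
    rfl
  rw [hfac]
  apply mul_le_mul_of_nonneg_left _ (Finset.prod_nonneg fun i _ => norm_nonneg _)
  apply Finset.prod_le_prod
  · intro i hi
    have h1 : N ≤ i := (Finset.mem_Ico.mp hi).1
    have h2 : (N:ℝ) ≤ i := by exact_mod_cast h1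
    linarith
  · intro i hi
    have hNi : N ≤ i := (Finset.mem_Ico.mp hi).1
    have hNi' : (N:ℝ) ≤ (i:ℝ) := by exact_mod_cast hNi
    have h1 : ‖(i:ℂ)‖ - ‖G‖ ≤ ‖(i:ℂ) - G‖ :=
      norm_sub_norm_le _ _
    rw [norm_sub_rev, Complex.norm_natCast] at h1
    linarith

set_option maxHeartbeats 1000000 in
/-- For coprime `0 < a < b`, `β ∈ ℂ`, `k ∈ {0,…,a-1}` with `(β - bk)/a ∉ ℕ`, and a real
`1 ≤ s < b/a`, the coefficients `c_m = ((β - bk)/a)_{bm} · k! / (k + am)!` of the Γ-series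
`φ_{v^k}` violate every Gevrey bound of order `s`: for all `C, D > 0` there is `m` with
`|c_m| > C · D^m · ((a·m)!)^{s-1}`. Hence the Gevrey index of `φ_{v^k}` is exactly `b/a`. -/
theorem gamma_series_coeff_not_gevrey_below_slope
    (a b : ℕ) (hab : Nat.Coprime a b) (ha : 0 < a) (haltb : a < b)
    (β : ℂ) (k : ℕ) (hk : k < a)
    (hβ : ∀ n : ℕ, (β - (b : ℂ) * (k : ℂ)) / (a : ℂ) ≠ (n : ℂ))
    (s : ℝ) (hs1 : 1 ≤ s) (hs2 : s < (b : ℝ) / (a : ℝ))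
    (c : ℕ → ℂ)
    (hc : ∀ m : ℕ, c m =
      (descPochhammer ℂ (b * m)).eval ((β - (b : ℂ) * (k : ℂ)) / (a : ℂ))
        * (k.factorial : ℂ) / ((k + a * m).factorial : ℂ)) :
    ∀ C D : ℝ, 0 < C → 0 < D →
      ∃ m : ℕ, C * D ^ m * (((a * m).factorial : ℝ)) ^ (s - 1) < ‖c m‖ := by
  intro C D hC hD
  set G : ℂ := (β - (b : ℂ) * (k : ℂ)) / (a : ℂ) with hGdef
  clear_value G
  set N : ℕ := ⌈‖G‖⌉₊ + 1 with hNdef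
  have hA : ‖G‖ + 1 ≤ N := by
    have h1 : ‖G‖ ≤ (⌈‖G‖⌉₊ : ℝ) := Nat.le_ceil _
    rw [hNdef]
    push_cast
    linarith
  clear_value N
  set ε : ℝ := ∏ j ∈ Finset.range N, ‖G - j‖ with hεdef
  have hεpos : 0 < ε := Finset.prod_pos fun j _ =>
    norm_pos_iff.mpr (sub_ne_zero.mpr (hβ j))
  have hb : 0 < b := lt_trans ha haltb
  have ha' : (0:ℝ) < a := by exact_mod_cast ha
  set δ : ℝ := (b:ℝ) - s * a with hδdef
  have hδ : 0 < δ := by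
    have := (lt_div_iff₀ ha').mp hs2
    rw [hδdef]; linarith
  set E : ℝ := 3 ^ b * D with hEdef
  have hEpos : 0 < E := by positivity
  have hδne : δ ≠ 0 := ne_of_gt hδ
  clear_value δ E ε
  obtain ⟨M1, hM1⟩ := exists_nat_gt ((2*E) ^ (2/δ))
  have hfk : (0:ℝ) < (k.factorial : ℝ) := by positivity
  obtain ⟨M2, hM2⟩ := pow_unbounded_of_one_lt (C / (ε * k.factorial)) (by norm_num : (1:ℝ) < 2)
  obtain ⟨M3, hM3⟩ := exists_nat_gt (2*((N:ℝ)+k)/δ)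
  set m : ℕ := M1 + M2 + M3 + N + k + 1 with hmdef
  clear_value m
  refine ⟨m, ?_⟩
  have hmN : N ≤ m := by omega
  have hmk : k ≤ m := by omega
  have hm1 : 1 ≤ m := by omega
  have hM1m : M1 ≤ m := by omega
  have hM2m : M2 ≤ m := by omega
  have hM3m : M3 ≤ m := by omega
  have hbmN : N ≤ b * m := le_trans hmN (Nat.le_mul_of_pos_left m hb)
  set x : ℝ := ((b * m : ℕ) : ℝ) with hxdef
  have hx1 : (1:ℝ) ≤ x := by
    rw [hxdef]
    exact_mod_cast Nat.one_le_iff_ne_zero.mpr (by positivity : b * m ≠ 0)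
  have hx0 : (0:ℝ) < x := lt_of_lt_of_le one_pos hx1
  clear_value x
  -- condition 1 : 2E ≤ x ^ (δ/2)
  have hx2E : 2 * E ≤ x ^ (δ/2) := by
    have hMx : ((2*E) ^ (2/δ)) < x := by
      have h1 : (M1:ℝ) ≤ x := by
        rw [hxdef]
        exact_mod_cast le_trans hM1m (Nat.le_mul_of_pos_left m hb)
      linarith
    have h0 : (0:ℝ) ≤ (2*E) ^ (2/δ) := Real.rpow_nonneg (by positivity) _
    have h2 := Real.rpow_le_rpow h0 (le_of_lt hMx) (by positivity : (0:ℝ) ≤ δ/2)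
    rw [← Real.rpow_mul (by positivity : (0:ℝ) ≤ 2*E)] at h2
    have he : (2/δ) * (δ/2) = 1 := by field_simp
    rwa [he, Real.rpow_one] at h2
  -- condition 2 : C < ε * k! * 2^m
  have hC2 : C < ε * (k.factorial : ℝ) * 2 ^ m := by
    have h1 : (2:ℝ) ^ M2 ≤ 2 ^ m := pow_le_pow_right₀ (by norm_num) hM2m
    have h2 : C / (ε * k.factorial) < 2 ^ m := lt_of_lt_of_le hM2 h1
    have := (div_lt_iff₀ (mul_pos hεpos hfk)).mp h2
    linarith
  -- condition 3 : 2 * (N + k) ≤ δ * m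
  have hC3 : 2 * ((N:ℝ) + k) ≤ δ * m := by
    have h1 := (div_lt_iff₀ hδ).mp hM3
    have h2 : (M3:ℝ) ≤ m := by exact_mod_cast hM3m
    nlinarith
  -- rewrite goal
  rw [hc m, norm_div, norm_mul, Complex.norm_natCast, Complex.norm_natCast]
  set P : ℝ := ‖(descPochhammer ℂ (b*m)).eval G‖ with hPdef
  have hP : ε * (((b*m - N).factorial : ℕ) : ℝ) ≤ P := by
    rw [hεdef, hPdef]; exact aux_poch_lower G N hA (b*m) hbmN
  clear_value P
  have hf2 : (0:ℝ) < (((k + a*m).factorial : ℕ) : ℝ) := by positivity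
  rw [lt_div_iff₀ hf2]
  -- exponents
  set p : ℝ := ((a*m : ℕ) : ℝ) * (s - 1) with hpdef
  set q : ℝ := ((k + a*m : ℕ) : ℝ) with hqdef
  -- B1
  have hB1 : (((k + a*m).factorial : ℕ) : ℝ) ≤ x ^ q := by
    have hnat : (k + a*m).factorial ≤ (b*m) ^ (k + a*m) := by
      calc (k + a*m).factorial ≤ (k + a*m) ^ (k + a*m) := Nat.factorial_le_pow _
        _ ≤ (b*m) ^ (k + a*m) := by
            apply Nat.pow_le_pow_left
            calc k + a*m ≤ m + a*m := by omega
              _ = (a+1) * m := by ring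
              _ ≤ b * m := Nat.mul_le_mul_right m (Nat.succ_le_of_lt haltb)
    have h1 : (((k + a*m).factorial : ℕ) : ℝ) ≤ x ^ ((k + a*m : ℕ)) := by
      rw [hxdef]; exact_mod_cast hnat
    rw [hqdef, ← Real.rpow_natCast x (k + a*m)] at *
    exact h1
  -- B2
  have hB2 : (((a*m).factorial : ℕ) : ℝ) ^ (s-1) ≤ x ^ p := by
    have hnat : ((a*m).factorial : ℕ) ≤ (b*m) ^ (a*m) := by
      calc (a*m).factorial ≤ (a*m) ^ (a*m) := Nat.factorial_le_pow _
        _ ≤ (b*m) ^ (a*m) := Nat.pow_le_pow_left (Nat.mul_le_mul_right m (le_of_lt haltb)) _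
    have h1 : (((a*m).factorial : ℕ) : ℝ) ≤ x ^ ((a*m : ℕ)) := by
      rw [hxdef]; exact_mod_cast hnat
    have h2 := Real.rpow_le_rpow (by positivity) h1 (by linarith : (0:ℝ) ≤ s - 1)
    calc (((a*m).factorial : ℕ) : ℝ) ^ (s-1) ≤ (x ^ ((a*m : ℕ))) ^ (s-1) := h2
      _ = x ^ p := by
          rw [← Real.rpow_natCast x (a*m), ← Real.rpow_mul (le_of_lt hx0), hpdef]
  clear_value p q
  -- key numeric inequality
  have hnum : C * D ^ m * 3 ^ (b*m) < ε * (k.factorial : ℝ) * (2*E) ^ m := by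
    have h2E : (2*E : ℝ) ^ m = 2 ^ m * 3 ^ (b*m) * D ^ m := by
      rw [mul_pow, hEdef, mul_pow, ← pow_mul]; ring
    have h0 : (0:ℝ) < D ^ m * 3 ^ (b*m) := by positivity
    have h3 := mul_lt_mul_of_pos_right hC2 h0
    calc C * D ^ m * 3 ^ (b*m) = C * (D ^ m * 3 ^ (b*m)) := by ring
      _ < ε * (k.factorial : ℝ) * 2 ^ m * (D ^ m * 3 ^ (b*m)) := h3
      _ = ε * (k.factorial : ℝ) * (2*E) ^ m := by rw [h2E]; ring
  -- e2 bound
  set e2 : ℝ := ((b * m : ℕ) : ℝ) - (p + q + N) with he2def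
  have he2eq : e2 = δ * m - ((k:ℝ) + N) := by
    rw [he2def, hpdef, hqdef, hδdef]
    push_cast
    ring
  clear_value e2
  have hxe2 : (2*E) ^ m ≤ x ^ e2 := by
    calc (2*E) ^ m ≤ (x ^ (δ/2)) ^ m := pow_le_pow_left₀ (by linarith) hx2E m
      _ = x ^ ((δ/2) * m) := by
          rw [← Real.rpow_natCast (x ^ (δ/2)) m, ← Real.rpow_mul (le_of_lt hx0)]
      _ ≤ x ^ e2 := by
          apply Real.rpow_le_rpow_of_exponent_le hx1
          rw [he2eq]; nlinarith
  -- big division bound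
  have hT : (0:ℝ) < 3 ^ (b*m) * x ^ ((N:ℝ)) :=
    mul_pos (by positivity) (Real.rpow_pos_of_pos hx0 _)
  have hkey : C * D ^ m * x ^ p * x ^ q <
      ε * (k.factorial : ℝ) * x ^ (((b * m : ℕ) : ℝ)) / (3 ^ (b*m) * x ^ ((N:ℝ))) := by
    rw [lt_div_iff₀ hT]
    have hsum : x ^ p * x ^ q * x ^ ((N:ℝ)) = x ^ (p + q + (N:ℝ)) := by
      rw [← Real.rpow_add hx0, ← Real.rpow_add hx0]
    have hsplit : x ^ (((b * m : ℕ) : ℝ)) = x ^ (p + q + (N:ℝ)) * x ^ e2 := by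
      rw [← Real.rpow_add hx0, he2def]; ring_nf
    calc C * D ^ m * x ^ p * x ^ q * (3 ^ (b*m) * x ^ ((N:ℝ)))
        = (C * D ^ m * 3 ^ (b*m)) * (x ^ p * x ^ q * x ^ ((N:ℝ))) := by ring
      _ = (C * D ^ m * 3 ^ (b*m)) * x ^ (p + q + (N:ℝ)) := by rw [hsum]
      _ < (ε * (k.factorial : ℝ) * (2*E) ^ m) * x ^ (p + q + (N:ℝ)) :=
          mul_lt_mul_of_pos_right hnum (Real.rpow_pos_of_pos hx0 _)
      _ ≤ (ε * (k.factorial : ℝ) * x ^ e2) * x ^ (p + q + (N:ℝ)) := by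
          apply mul_le_mul_of_nonneg_right _ (le_of_lt (Real.rpow_pos_of_pos hx0 _))
          exact mul_le_mul_of_nonneg_left hxe2 (le_of_lt (mul_pos hεpos hfk))
      _ = ε * (k.factorial : ℝ) * x ^ (((b * m : ℕ) : ℝ)) := by rw [hsplit]; ring
  -- from division bound to factorial
  have hdiv : ε * (k.factorial : ℝ) * x ^ (((b * m : ℕ) : ℝ)) / (3 ^ (b*m) * x ^ ((N:ℝ)))
      ≤ ε * (((b*m - N).factorial : ℕ) : ℝ) * (k.factorial : ℝ) := by
    rw [div_le_iff₀ hT]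
    have hB3 : x ^ (((b * m : ℕ) : ℝ)) ≤ 3 ^ (b*m) * (((b*m).factorial : ℕ) : ℝ) := by
      rw [Real.rpow_natCast, hxdef]
      exact_mod_cast aux_pow_le_fact (b*m)
    have hB4 : (((b*m).factorial : ℕ) : ℝ) ≤ (((b*m - N).factorial : ℕ) : ℝ) * x ^ ((N:ℝ)) := by
      have h0 := aux_fact_le (b*m) N hbmN
      have h := (Nat.cast_le (α := ℝ)).mpr h0
      push_cast at h
      rw [Real.rpow_natCast, hxdef]
      exact_mod_cast h
    calc ε * (k.factorial : ℝ) * x ^ (((b * m : ℕ) : ℝ))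
        ≤ ε * (k.factorial : ℝ) * (3 ^ (b*m) * (((b*m).factorial : ℕ) : ℝ)) :=
          mul_le_mul_of_nonneg_left hB3 (le_of_lt (mul_pos hεpos hfk))
      _ ≤ ε * (k.factorial : ℝ) * (3 ^ (b*m) * ((((b*m - N).factorial : ℕ) : ℝ) * x ^ ((N:ℝ)))) := by
          apply mul_le_mul_of_nonneg_left _ (le_of_lt (mul_pos hεpos hfk))
          exact mul_le_mul_of_nonneg_left hB4 (by positivity)
      _ = ε * (((b*m - N).factorial : ℕ) : ℝ) * (k.factorial : ℝ) * (3 ^ (b*m) * x ^ ((N:ℝ))) := by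
          ring
  -- conclude
  calc C * D ^ m * (((a*m).factorial : ℕ) : ℝ) ^ (s-1) * (((k + a*m).factorial : ℕ) : ℝ)
      ≤ C * D ^ m * x ^ p * x ^ q := by
        have h1 : C * D ^ m * (((a*m).factorial : ℕ) : ℝ) ^ (s-1)
            ≤ C * D ^ m * x ^ p :=
          mul_le_mul_of_nonneg_left hB2 (by positivity)
        have hxp : (0:ℝ) < x ^ p := Real.rpow_pos_of_pos hx0 _
        calc C * D ^ m * (((a*m).factorial : ℕ) : ℝ) ^ (s-1) * (((k + a*m).factorial : ℕ) : ℝ)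
            ≤ C * D ^ m * x ^ p * (((k + a*m).factorial : ℕ) : ℝ) :=
              mul_le_mul_of_nonneg_right h1 (by positivity)
          _ ≤ C * D ^ m * x ^ p * x ^ q :=
              mul_le_mul_of_nonneg_left hB1
              (mul_nonneg (by positivity) hxp.le)
    _ < ε * (k.factorial : ℝ) * x ^ (((b * m : ℕ) : ℝ)) / (3 ^ (b*m) * x ^ ((N:ℝ))) := hkey
    _ ≤ ε * (((b*m - N).factorial : ℕ) : ℝ) * (k.factorial : ℝ) := hdiv
    _ ≤ P * (k.factorial : ℝ) := mul_le_mul_of_nonneg_right hP (by positivity)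
end

section
/- Let a and b be coprime integers with 0 < a < b and β ∈ ℂ. Let V_A(β) ⊆ ℂ[[x₁,x₂]] be the subspace of formal power series f with f_{(i,j)} = 0 whenever a·i + b·j = β. The ℂ-linear map E sending f to the series with coefficients (a·i + b·j − β)·f_{(i,j)} maps V_A(β) bijectively onto V_A(β). Moreover, for every real s ≥ 1, if g ∈ V_A(β) is Gevrey of order s, then the unique f ∈ V_A(β) with E f = g is Gevrey of order s. -/
noncomputable section

abbrev M2 : Type := MvPowerSeries (Fin 2) ℂ

/-- Coefficient `f_{(i,j)}` of a formal power series `f ∈ ℂ[[x₁,x₂]]`. -/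
def co (f : M2) (i j : ℕ) : ℂ :=
  MvPowerSeries.coeff (Finsupp.single (0 : Fin 2) i + Finsupp.single (1 : Fin 2) j) f

/-- A coefficient family `F` is Gevrey of order `s` along `x₂ = 0`:
`|F i j| ≤ C·R^(i+j)·(j!)^(s-1)` for some `C, R > 0`. -/
def GevreyFn (s : ℝ) (F : ℕ → ℕ → ℂ) : Prop :=
  ∃ C R : ℝ, 0 < C ∧ 0 < R ∧
    ∀ i j : ℕ, ‖F i j‖ ≤ C * R ^ (i + j) * (j.factorial : ℝ) ^ (s - 1)

/-- A coefficient family is convergent iff it is Gevrey of order `1`, i.e.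
`|F i j| ≤ C·R^(i+j)` for some `C, R > 0`. -/
def ConvFn (F : ℕ → ℕ → ℂ) : Prop := GevreyFn 1 F

/-- Coefficients of `P f` where `P = ∂₁^b - ∂₂^a`:
`(P f)_{(i,j)} = ((i+b)!/i!)·f_{(i+b,j)} - ((j+a)!/j!)·f_{(i,j+a)}`. -/
def Pco (a b : ℕ) (f : M2) (i j : ℕ) : ℂ :=
  (((i + b).factorial / i.factorial : ℕ) : ℂ) * co f (i + b) j
    - (((j + a).factorial / j.factorial : ℕ) : ℂ) * co f i (j + a)

/-- Coefficients of `E f` where `E = a·x₁∂₁ + b·x₂∂₂ - β`: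
`(E f)_{(i,j)} = (a·i + b·j - β)·f_{(i,j)}`. -/
def Eco (a b : ℕ) (β : ℂ) (f : M2) (i j : ℕ) : ℂ :=
  (((a * i + b * j : ℕ) : ℂ) - β) * co f i j

/-- Coefficients of `E_p f` where `E_p = a·(t₁+ε)∂₁ + b·x₂∂₂ - β`:
`(E_p f)_{(i,j)} = (a·i + b·j - β)·f_{(i,j)} + a·ε·(i+1)·f_{(i+1,j)}`. -/
def Epco (a b : ℕ) (β ε : ℂ) (f : M2) (i j : ℕ) : ℂ :=
  (((a * i + b * j : ℕ) : ℂ) - β) * co f i j + (a : ℂ) * ε * ((i : ℂ) + 1) * co f (i + 1) j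

/-- The Euler operator `E = a·x₁∂₁ + b·x₂∂₂ - β`, acting coefficientwise on `ℂ[[x₁,x₂]]` by
`(E f)_{(i,j)} = (a·i + b·j - β)·f_{(i,j)}`. -/
def Eop (a b : ℕ) (β : ℂ) (f : M2) : M2 :=
  fun d => (((a * d 0 + b * d 1 : ℕ) : ℂ) - β) * MvPowerSeries.coeff d f

lemma d_eq (d : Fin 2 →₀ ℕ) :
    d = Finsupp.single 0 (d 0) + Finsupp.single 1 (d 1) := by
  ext x; fin_cases x <;> simp

lemma co_eq (f : M2) (d : Fin 2 →₀ ℕ) : co f (d 0) (d 1) = f d := by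
  rw [co, MvPowerSeries.coeff_apply, ← d_eq]

lemma co_Eop (a b : ℕ) (β : ℂ) (f : M2) (i j : ℕ) :
    co (Eop a b β f) i j = (((a*i+b*j : ℕ):ℂ) - β) * co f i j := by
  simp [co, Eop, MvPowerSeries.coeff_apply, Finsupp.single_apply]

lemma co_mk (F : ℕ → ℕ → ℂ) (i j : ℕ) :
    co (fun d => F (d 0) (d 1) : M2) i j = F i j := by
  show F ((Finsupp.single (0 : Fin 2) i + Finsupp.single (1 : Fin 2) j) 0)
    ((Finsupp.single (0 : Fin 2) i + Finsupp.single (1 : Fin 2) j) 1) = F i j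
  simp [Finsupp.single_apply]

lemma exists_delta (β : ℂ) : ∃ δ : ℝ, 0 < δ ∧ δ ≤ 1 ∧
    ∀ n : ℕ, (n:ℂ) ≠ β → δ ≤ ‖(n:ℂ) - β‖ := by
  set N := ⌊‖β‖⌋₊ + 1 with hN
  classical
  set T : Finset ℝ := insert 1 ((Finset.filter (fun n : ℕ => (n:ℂ) ≠ β) (Finset.range (N+1))).image
      fun n : ℕ => ‖(n:ℂ) - β‖) with hT
  have hne : T.Nonempty := ⟨1, Finset.mem_insert_self _ _⟩
  have h1 : T.min' hne ≤ 1 := Finset.min'_le _ _ (Finset.mem_insert_self _ _)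
  refine ⟨T.min' hne, ?_, h1, ?_⟩
  · rw [Finset.lt_min'_iff]
    intro y hy
    rcases Finset.mem_insert.mp hy with h | h
    · simp [h]
    · obtain ⟨n, hn, rfl⟩ := Finset.mem_image.mp h
      have : (n:ℂ) - β ≠ 0 := sub_ne_zero.mpr (Finset.mem_filter.mp hn).2
      simpa using (norm_pos_iff.mpr this)
  · intro n hn
    by_cases hle : n ≤ N
    · apply Finset.min'_le
      apply Finset.mem_insert_of_mem
      exact Finset.mem_image.mpr ⟨n, Finset.mem_filter.mpr ⟨Finset.mem_range.mpr (by omega), hn⟩, rfl⟩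
    · have h2 : ‖β‖ < N := by
        have := Nat.lt_floor_add_one ‖β‖
        push_cast [hN]; linarith
      have h3 : (N:ℝ) + 1 ≤ n := by exact_mod_cast Nat.succ_le_of_lt (lt_of_not_ge hle)
      have h4 : ‖(n:ℂ)‖ ≤ ‖(n:ℂ)-β‖ + ‖β‖ := by
        calc ‖(n:ℂ)‖ = ‖(n:ℂ)-β+β‖ := by ring_nf
        _ ≤ _ := norm_add_le _ _
      have h5 : ‖(n:ℂ)‖ = n := Complex.norm_natCast n
      linarith

/-- Let `V_A(β)` be the space of formal power series whose coefficient `f_{(i,j)}` vanishes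
whenever `a·i + b·j = β`. The Euler operator `E` maps `V_A(β)` bijectively onto itself, and
for every real `s ≥ 1`, if `g ∈ V_A(β)` is Gevrey of order `s` then the unique `f ∈ V_A(β)`
with `E f = g` is Gevrey of order `s`. -/
theorem euler_automorphism_of_V
    (a b : ℕ) (hab : Nat.Coprime a b) (ha : 0 < a) (haltb : a < b) (β : ℂ)
    (V : Set M2)
    (hV : V = {f : M2 | ∀ i j : ℕ, ((a * i + b * j : ℕ) : ℂ) = β → co f i j = 0}) :
    Set.BijOn (Eop a b β) V V ∧
    ∀ s : ℝ, 1 ≤ s → ∀ f g : M2, f ∈ V → g ∈ V → Eop a b β f = g →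
      GevreyFn s (co g) → GevreyFn s (co f) := by
  classical
  subst hV
  obtain ⟨δ, hδ, hδ1, hδ2⟩ := exists_delta β
  constructor
  · refine ⟨?_, ?_, ?_⟩
    · -- MapsTo
      intro f hf i j hij
      rw [co_Eop, hij, sub_self, zero_mul]
    · -- InjOn
      intro f hf g hg h
      funext d
      have hd := congrFun h d
      simp only [Eop, MvPowerSeries.coeff_apply] at hd
      by_cases hc : ((a * d 0 + b * d 1 : ℕ) : ℂ) = β
      · have h1 : f d = 0 := by rw [← co_eq f d]; exact hf (d 0) (d 1) hc
        have h2 : g d = 0 := by rw [← co_eq g d]; exact hg (d 0) (d 1) hc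
        rw [h1, h2]
      · exact mul_left_cancel₀ (sub_ne_zero.mpr hc) hd
    · -- SurjOn
      intro g hg
      set F : ℕ → ℕ → ℂ := fun i j =>
        if ((a * i + b * j : ℕ) : ℂ) = β then 0
        else co g i j / (((a * i + b * j : ℕ) : ℂ) - β) with hF
      refine ⟨(fun d => F (d 0) (d 1) : M2), ?_, ?_⟩
      · intro i j hij
        rw [co_mk, hF]
        simp [hij]
      · funext d
        show (((a * d 0 + b * d 1 : ℕ) : ℂ) - β) * MvPowerSeries.coeff d _ = g d
        show (((a * d 0 + b * d 1 : ℕ) : ℂ) - β) * F (d 0) (d 1) = g d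
        by_cases hc : ((a * d 0 + b * d 1 : ℕ) : ℂ) = β
        · have h2 : g d = 0 := by rw [← co_eq g d]; exact hg (d 0) (d 1) hc
          simp [hF, hc, h2]
        · have := co_eq g d
          simp only [hF, hc, if_false]
          rw [mul_div_cancel₀ _ (sub_ne_zero.mpr hc), co_eq]
  · intro s hs f g hf hg hfg ⟨C, R, hC, hR, hb⟩
    refine ⟨C / δ, R, div_pos hC hδ, hR, ?_⟩
    intro i j
    have hco : co g i j = (((a * i + b * j : ℕ) : ℂ) - β) * co f i j := by
      rw [← hfg, co_Eop]
    by_cases hc : ((a * i + b * j : ℕ) : ℂ) = β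
    · rw [hf i j hc]
      simp only [norm_zero]
      positivity
    · have h6 : δ * ‖co f i j‖ ≤ ‖co g i j‖ := by
        rw [hco, norm_mul]
        exact mul_le_mul_of_nonneg_right (hδ2 _ hc) (norm_nonneg _)
      calc ‖co f i j‖ = (δ * ‖co f i j‖) / δ := by
            field_simp
        _ ≤ (C * R ^ (i + j) * (j.factorial : ℝ) ^ (s - 1)) / δ :=
            (div_le_div_iff_of_pos_right hδ).mpr (h6.trans (hb i j))
        _ = C / δ * R ^ (i + j) * (j.factorial : ℝ) ^ (s - 1) := by ring


end
end

section
/- Let a and b be coprime integers with 0 < a < b and β ∈ ℂ. Let g ∈ ℂ[[x₁,x₂]] and suppose that E g, the series with coefficients (a·i + b·j − β)·g_{(i,j)}, is convergent, i.e. there exist C, R > 0 with |(a·i + b·j − β)·g_{(i,j)}| ≤ C·R^{i+j} for all i, j. Then g itself is convergent, i.e. there exist C′, R′ > 0 with |g_{(i,j)}| ≤ C′·R′^{i+j} for all i, j. -/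
noncomputable section

/-- If `E g` is convergent, where `(E g)_{(i,j)} = (a·i + b·j - β)·g_{(i,j)}`, then `g` is
itself convergent. -/
theorem convergent_of_euler_convergent
    (a b : ℕ) (hab : Nat.Coprime a b) (ha : 0 < a) (haltb : a < b) (β : ℂ)
    (g : M2)
    (h : ∃ C R : ℝ, 0 < C ∧ 0 < R ∧
      ∀ i j : ℕ, ‖(((a * i + b * j : ℕ) : ℂ) - β) * co g i j‖ ≤ C * R ^ (i + j)) :
    ∃ C' R' : ℝ, 0 < C' ∧ 0 < R' ∧
      ∀ i j : ℕ, ‖co g i j‖ ≤ C' * R' ^ (i + j) := by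
  obtain ⟨C, R, hC, hR, hb⟩ := h
  set N : ℕ := ⌈‖β‖⌉₊ + 1 with hN
  set S : ℝ := ∑ i ∈ Finset.range N, ∑ j ∈ Finset.range N, ‖co g i j‖ with hS
  have hS0 : 0 ≤ S := Finset.sum_nonneg fun i _ =>
    Finset.sum_nonneg fun j _ => norm_nonneg _
  refine ⟨C + S, max R 1, by positivity, by positivity, fun i j => ?_⟩
  have hR'1 : (1 : ℝ) ≤ max R 1 := le_max_right _ _
  have hpow1 : (1 : ℝ) ≤ (max R 1) ^ (i + j) := one_le_pow₀ hR'1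
  by_cases hc : a * i + b * j < N
  · -- then i < N and j < N
    have hi : i < N := lt_of_le_of_lt (by nlinarith) hc
    have hj : j < N := lt_of_le_of_lt (by nlinarith) hc
    have h1 : ‖co g i j‖ ≤ S := by
      calc ‖co g i j‖
          ≤ ∑ j' ∈ Finset.range N, ‖co g i j'‖ :=
            Finset.single_le_sum (f := fun j' => ‖co g i j'‖)
              (fun _ _ => norm_nonneg _) (Finset.mem_range.mpr hj)
        _ ≤ S := Finset.single_le_sum
              (f := fun i' => ∑ j' ∈ Finset.range N, ‖co g i' j'‖)
              (fun _ _ => Finset.sum_nonneg fun _ _ => norm_nonneg _)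
              (Finset.mem_range.mpr hi)
    calc ‖co g i j‖ ≤ S := h1
      _ ≤ (C + S) * 1 := by linarith
      _ ≤ (C + S) * (max R 1) ^ (i + j) := by
          apply mul_le_mul_of_nonneg_left hpow1 (by linarith)
  · -- |a*i + b*j - β| ≥ 1
    push_neg at hc
    have hβ : ‖β‖ ≤ ⌈‖β‖⌉₊ := Nat.le_ceil _
    have hge : (1 : ℝ) ≤ ‖((a * i + b * j : ℕ) : ℂ) - β‖ := by
      have h2 : ((a * i + b * j : ℕ) : ℝ) - ‖β‖ ≤
          ‖((a * i + b * j : ℕ) : ℂ) - β‖ := by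
        have := norm_sub_norm_le ((a * i + b * j : ℕ) : ℂ) β
        simp only [Complex.norm_natCast] at this
        linarith
      have h3 : (N : ℝ) ≤ ((a * i + b * j : ℕ) : ℝ) := by exact_mod_cast hc
      rw [hN] at h3
      push_cast at h2 h3 ⊢
      linarith
    have key : ‖co g i j‖ ≤
        ‖(((a * i + b * j : ℕ) : ℂ) - β) * co g i j‖ := by
      rw [norm_mul]
      nlinarith [norm_nonneg (co g i j)]
    calc ‖co g i j‖
        ≤ C * R ^ (i + j) := key.trans (hb i j)
      _ ≤ (C + S) * (max R 1) ^ (i + j) := by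
          apply mul_le_mul (by linarith)
            (pow_le_pow_left₀ hR.le (le_max_left _ _) _) (by positivity) (by linarith)

end
end

section
/- Let a and b be coprime integers with 0 < a < b, β ∈ ℂ, and ε ∈ ℂ with ε ≠ 0. A formal power series f ∈ ℂ[[t₁,x₂]] satisfies E_p f = 0 if and only if for all i, j ∈ ℕ one has f_{(i,j)} = ((β − b·j)/a)_i · f_{(0,j)} / (i! · ε^i). (Equivalently, f = Σ_{k=0}^{a−1} f^{(k)} where f^{(k)} = Σ_{m≥0} f_{k+am} (t₁+ε)^{(β−bk)/a − bm} x₂^{k+am} with f_{k+am} ∈ ℂ.) -/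
noncomputable section

/-- A formal power series `f ∈ ℂ[[t₁,x₂]]` satisfies `E_p f = 0` if and only if its
coefficients are given by `f_{(i,j)} = ((β - b·j)/a)_i · f_{(0,j)} / (i! · ε^i)`. -/
theorem euler_kernel_coefficient_formula
    (a b : ℕ) (hab : Nat.Coprime a b) (ha : 0 < a) (haltb : a < b)
    (β : ℂ) (ε : ℂ) (hε : ε ≠ 0) (f : M2) :
    (∀ i j : ℕ, Epco a b β ε f i j = 0) ↔
    (∀ i j : ℕ, co f i j =
      (descPochhammer ℂ i).eval ((β - (b : ℂ) * (j : ℂ)) / (a : ℂ)) * co f 0 j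
        / ((i.factorial : ℂ) * ε ^ i)) := by

  have haC : (a:ℂ) ≠ 0 := Nat.cast_ne_zero.mpr ha.ne'
  constructor
  · intro h i j
    induction i with
    | zero => simp
    | succ i ih =>
      have h0 := h i j
      unfold Epco at h0
      have hi1 : ((i:ℂ)+1) ≠ 0 := Nat.cast_add_one_ne_zero i
      have : co f (i+1) j = (β - ((a*i+b*j : ℕ):ℂ)) * co f i j / ((a:ℂ) * ε * ((i:ℂ)+1)) := by
        field_simp at h0 ⊢
        linear_combination h0
      rw [this, ih, descPochhammer_succ_eval]
      rw [Nat.factorial_succ]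
      push_cast
      field_simp
      ring
  · intro h i j
    unfold Epco
    rw [h i j, h (i+1) j, descPochhammer_succ_eval, Nat.factorial_succ]
    have hi1 : ((i:ℂ)+1) ≠ 0 := Nat.cast_add_one_ne_zero i
    have hfac : ((i.factorial:ℂ)) ≠ 0 := Nat.cast_ne_zero.mpr i.factorial_ne_zero
    have hεi : ε ^ i ≠ 0 := pow_ne_zero _ hε
    push_cast
    field_simp
    ring


end
end

section
/- Let a and b be coprime integers with 0 < a < b, let ε ∈ ℂ with ε ≠ 0, suppose β ∈ ℂ satisfies β ≠ a·n₁ + b·n₂ for all n₁, n₂ ∈ ℕ, and let s be a real number with 1 ≤ s < b/a. If f ∈ ℂ[[t₁,x₂]] is Gevrey of order s and satisfies P f = 0 and E_p f = 0, then f = 0. -/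
noncomputable section

lemma fin2_decomp (d : Fin 2 →₀ ℕ) :
    d = Finsupp.single (0 : Fin 2) (d 0) + Finsupp.single (1 : Fin 2) (d 1) := by
  ext x
  fin_cases x <;> simp

lemma fact_add_le (a j : ℕ) : (j + a).factorial ≤ j.factorial * (j + a) ^ a := by
  induction a with
  | zero => simp
  | succ n ih =>
      have h1 : (j + (n + 1)).factorial = (j + n + 1) * (j + n).factorial := by
        rw [show j + (n + 1) = (j + n) + 1 by ring, Nat.factorial_succ]
      calc (j + (n + 1)).factorial = (j + n + 1) * (j + n).factorial := h1
        _ ≤ (j + n + 1) * (j.factorial * (j + n) ^ n) := Nat.mul_le_mul_left _ ih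
        _ ≤ (j + n + 1) * (j.factorial * (j + n + 1) ^ n) :=
            Nat.mul_le_mul_left _ (Nat.mul_le_mul_left _ (Nat.pow_le_pow_left (by omega) n))
        _ = j.factorial * (j + n + 1) ^ (n + 1) := by ring
        _ = j.factorial * (j + (n + 1)) ^ (n + 1) := by rw [show j + n + 1 = j + (n+1) by ring]

set_option maxHeartbeats 1600000 in
/-- If `β ∉ a·ℕ + b·ℕ` and `1 ≤ s < b/a`, then the only Gevrey solution of order `s` of the
hypergeometric system at `p = (ε,0)`, `ε ≠ 0`, is `f = 0`. -/
theorem gevrey_solution_below_slope_is_zero_nonresonant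
    (a b : ℕ) (hab : Nat.Coprime a b) (ha : 0 < a) (haltb : a < b)
    (ε : ℂ) (hε : ε ≠ 0) (β : ℂ)
    (hβ : ∀ n₁ n₂ : ℕ, β ≠ (a : ℂ) * n₁ + (b : ℂ) * n₂)
    (s : ℝ) (hs1 : 1 ≤ s) (hs2 : s < (b : ℝ) / (a : ℝ))
    (f : M2) (hfG : GevreyFn s (co f))
    (hfP : ∀ i j : ℕ, Pco a b f i j = 0)
    (hfE : ∀ i j : ℕ, Epco a b β ε f i j = 0) :
    f = 0 := by
  classical
  obtain ⟨C, R, hC, hR, hG⟩ := hfG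
  have hb2 : 2 ≤ b := by omega
  have haR : (0:ℝ) < a := by exact_mod_cast ha
  have hbR : (0:ℝ) < b := by positivity
  have haC : (a : ℂ) ≠ 0 := Nat.cast_ne_zero.mpr ha.ne'
  have hεR : (0:ℝ) < ‖ε‖ := by
    simpa using (norm_pos_iff.mpr hε)
  -- the factorial quotient
  set D : ℕ → ℕ := fun j => (j + a).factorial / j.factorial with hDdef
  have hDmul : ∀ j, j.factorial * D j = (j + a).factorial := fun j =>
    Nat.mul_div_cancel' (Nat.factorial_dvd_factorial (Nat.le_add_right _ _))
  have hDpos : ∀ j, 0 < D j := by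
    intro j
    exact Nat.div_pos (Nat.factorial_le (Nat.le_add_right _ _)) (Nat.factorial_pos _)
  have hDle : ∀ j, D j ≤ (j + a) ^ a := by
    intro j
    have h1 : j.factorial * D j ≤ j.factorial * (j + a) ^ a := by
      rw [hDmul j]; exact fact_add_le a j
    exact Nat.le_of_mul_le_mul_left h1 (Nat.factorial_pos _)
  -- recursion in i from E_p
  have hstep : ∀ i j : ℕ, (a : ℂ) * ε * ((i : ℂ) + 1) * co f (i + 1) j
      = (β - ((a * i + b * j : ℕ) : ℂ)) * co f i j := by
    intro i j
    have h := hfE i j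
    unfold Epco at h
    linear_combination h
  set q : ℕ → ℕ → ℂ := fun j k => (β - ((a * k + b * j : ℕ) : ℂ)) / ((a : ℂ) * ε * ((k : ℂ) + 1))
    with hqdef
  have hden : ∀ k : ℕ, (a : ℂ) * ε * ((k : ℂ) + 1) ≠ 0 := by
    intro k
    exact mul_ne_zero (mul_ne_zero haC hε) (Nat.cast_add_one_ne_zero k)
  have hnum : ∀ j k : ℕ, β - ((a * k + b * j : ℕ) : ℂ) ≠ 0 := by
    intro j k
    rw [sub_ne_zero]
    push_cast
    exact hβ k j
  have hqne : ∀ j k, q j k ≠ 0 := fun j k => div_ne_zero (hnum j k) (hden k)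
  have hrec : ∀ j i, co f (i + 1) j = q j i * co f i j := by
    intro j i
    rw [hqdef]
    simp only
    rw [div_mul_eq_mul_div, eq_div_iff (hden i)]
    linear_combination hstep i j
  have hprod : ∀ j i, co f i j = co f 0 j * ∏ k ∈ Finset.range i, q j k := by
    intro j i
    induction i with
    | zero => simp
    | succ n ih => rw [hrec j n, ih, Finset.prod_range_succ]; ring
  have hP0 : ∀ j, ((b.factorial : ℕ) : ℂ) * co f b j = ((D j : ℕ) : ℂ) * co f 0 (j + a) := by
    intro j
    have h := hfP 0 j
    unfold Pco at h
    simp only [zero_add, Nat.factorial_zero, Nat.div_one] at h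
    linear_combination h
  have hkey : ∀ j, ((D j : ℕ) : ℂ) * co f 0 (j + a)
      = (b.factorial : ℂ) * (∏ k ∈ Finset.range b, q j k) * co f 0 j := by
    intro j
    rw [← hP0 j, hprod j b]
    ring
  have hnz : ∀ j, co f 0 j ≠ 0 → co f 0 (j + a) ≠ 0 := by
    intro j h0 hcon
    have h := hkey j
    rw [hcon, mul_zero] at h
    have hbne : (b.factorial : ℂ) ≠ 0 := Nat.cast_ne_zero.mpr (Nat.factorial_pos b).ne'
    have hpne : (∏ k ∈ Finset.range b, q j k) ≠ 0 :=
      Finset.prod_ne_zero_iff.mpr fun k _ => hqne j k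
    exact (mul_ne_zero (mul_ne_zero hbne hpne) h0) h.symm
  -- all coefficients with i = 0 vanish
  have hzero0 : ∀ j, co f 0 j = 0 := by
    intro j₀
    by_contra h0
    have hprog : ∀ n, co f 0 (j₀ + a * n) ≠ 0 := by
      intro n
      induction n with
      | zero => simpa using h0
      | succ m ih =>
          have := hnz (j₀ + a * m) ih
          have hidx : j₀ + a * m + a = j₀ + a * (m + 1) := by ring
          rwa [hidx] at this
    -- absolute value identity
    have habs : ∀ j, (D j : ℝ) * ‖co f 0 (j + a)‖
        = (b.factorial : ℝ) * (∏ k ∈ Finset.range b, ‖q j k‖)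
          * ‖co f 0 j‖ := by
      intro j
      have h := congrArg (‖·‖) (hkey j)
      simpa [norm_mul, norm_prod, Complex.norm_natCast] using h
    -- lower bound for each factor
    set c1 : ℝ := 1 / ((a : ℝ) * ‖ε‖ * b) with hc1def
    have hc1 : 0 < c1 := by rw [hc1def]; positivity
    have hqlb : ∀ j k : ℕ, k < b → ‖β‖ ≤ (j : ℝ) →
        c1 * j ≤ ‖q j k‖ := by
      intro j k hk hj
      have hnumlb : (j : ℝ) ≤ ‖β - ((a * k + b * j : ℕ) : ℂ)‖ := by
        have h1 : ‖((a * k + b * j : ℕ) : ℂ)‖ = ((a * k + b * j : ℕ) : ℝ) :=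
          Complex.norm_natCast _
        have h2 : ‖((a * k + b * j : ℕ) : ℂ)‖ - ‖β‖
            ≤ ‖((a * k + b * j : ℕ) : ℂ) - β‖ := by
          simpa using norm_sub_norm_le ((a * k + b * j : ℕ) : ℂ) β
        rw [norm_sub_rev]
        have hb2R : (2:ℝ) ≤ (b:ℝ) := by exact_mod_cast hb2
        have h3 : 2 * (j : ℝ) ≤ ((a * k + b * j : ℕ) : ℝ) := by
          push_cast
          have h4 : 2 * (j:ℝ) ≤ (b:ℝ) * j := by nlinarith [Nat.cast_nonneg (α := ℝ) j]
          have h5 : (0:ℝ) ≤ (a:ℝ) * k := by positivity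
          linarith
        rw [h1] at h2
        linarith
      have hdenub : ‖(a : ℂ) * ε * ((k : ℂ) + 1)‖
          ≤ (a : ℝ) * ‖ε‖ * b := by
        have h1 : ‖(a : ℂ) * ε * ((k : ℂ) + 1)‖
            = (a : ℝ) * ‖ε‖ * ((k : ℝ) + 1) := by
          rw [norm_mul, norm_mul, Complex.norm_natCast,
            show ((k : ℂ) + 1) = ((k + 1 : ℕ) : ℂ) by push_cast; ring, Complex.norm_natCast]
          push_cast
          ring
        rw [h1]
        have hk1 : (k : ℝ) + 1 ≤ b := by exact_mod_cast Nat.succ_le_of_lt hk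
        exact mul_le_mul_of_nonneg_left hk1 (by positivity)
      have habsq : ‖q j k‖
          = ‖β - ((a * k + b * j : ℕ) : ℂ)‖
            / ‖(a : ℂ) * ε * ((k : ℂ) + 1)‖ := by
        rw [hqdef]; exact norm_div _ _
      rw [habsq]
      have hdpos : 0 < ‖(a : ℂ) * ε * ((k : ℂ) + 1)‖ :=
        norm_pos_iff.mpr (hden k)
      have hjnn : (0:ℝ) ≤ (j : ℝ) := Nat.cast_nonneg j
      calc c1 * j = (j : ℝ) / ((a : ℝ) * ‖ε‖ * b) := by
            rw [hc1def]; ring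
        _ ≤ ‖β - ((a * k + b * j : ℕ) : ℂ)‖
            / ‖(a : ℂ) * ε * ((k : ℂ) + 1)‖ :=
          div_le_div₀ (norm_nonneg _) hnumlb hdpos hdenub
    -- exponent gap
    have has : (a : ℝ) * s < b := by
      have := (lt_div_iff₀ haR).mp hs2
      linarith
    have hδ : 0 < (b : ℝ) - a * s := by linarith
    have hs0 : 0 < s := lt_of_lt_of_le one_pos hs1
    set K : ℝ := 2 * R ^ a * (2 : ℝ) ^ ((a : ℝ) * s) / c1 ^ b with hKdef
    obtain ⟨J, hJ⟩ := Filter.eventually_atTop.mp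
      (((tendsto_rpow_atTop hδ).comp tendsto_natCast_atTop_atTop).eventually_ge_atTop K)
    set J' : ℕ := max J (max a (max 1 (Nat.ceil (‖β‖)))) with hJ'def
    -- key per-step inequality
    have hstep2 : ∀ j : ℕ, J' ≤ j →
        2 * R ^ a * ((D j : ℝ)) ^ s
          ≤ (b.factorial : ℝ) * ∏ k ∈ Finset.range b, ‖q j k‖ := by
      intro j hj
      have hjJ : J ≤ j := le_trans (le_max_left _ _) hj
      have hja : a ≤ j := le_trans (le_trans (le_max_left _ _) (le_max_right _ _)) hj
      have hj1 : 1 ≤ j := le_trans (le_trans (le_trans (le_max_left _ _) (le_max_right _ _))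
        (le_max_right _ _)) hj
      have hjβ : ‖β‖ ≤ (j : ℝ) := by
        have h1 : Nat.ceil (‖β‖) ≤ j :=
          le_trans (le_trans (le_trans (le_max_right _ _) (le_max_right _ _))
            (le_max_right _ _)) hj
        calc ‖β‖ ≤ (Nat.ceil (‖β‖) : ℝ) := Nat.le_ceil _
          _ ≤ (j : ℝ) := by exact_mod_cast h1
      have hjpos : (0:ℝ) < (j : ℝ) := by exact_mod_cast hj1
      -- product lower bound
      have hplb : (c1 * j) ^ b ≤ ∏ k ∈ Finset.range b, ‖q j k‖ := by
        have := Finset.prod_le_prod (s := Finset.range b)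
          (f := fun _ => c1 * (j : ℝ)) (g := fun k => ‖q j k‖)
          (fun k _ => by positivity)
          (fun k hk => hqlb j k (Finset.mem_range.mp hk) hjβ)
        simpa using this
      -- D bound
      have hDub : (D j : ℝ) ^ s ≤ (2 : ℝ) ^ ((a:ℝ) * s) * (j : ℝ) ^ ((a:ℝ) * s) := by
        have h1 : (D j : ℝ) ≤ ((2 * j : ℕ) : ℝ) ^ a := by
          have h2 : D j ≤ (2 * j) ^ a :=
            le_trans (hDle j) (Nat.pow_le_pow_left (by omega) a)
          exact_mod_cast h2
        have h3 : (D j : ℝ) ^ s ≤ (((2 * j : ℕ) : ℝ) ^ a) ^ s :=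
          Real.rpow_le_rpow (Nat.cast_nonneg _) h1 (le_of_lt hs0)
        have h4 : (((2 * j : ℕ) : ℝ) ^ a) ^ s = ((2 * j : ℕ) : ℝ) ^ ((a : ℝ) * s) := by
          rw [← Real.rpow_natCast ((2 * j : ℕ) : ℝ) a, ← Real.rpow_mul (Nat.cast_nonneg _)]
        have h5 : ((2 * j : ℕ) : ℝ) ^ ((a : ℝ) * s)
            = (2 : ℝ) ^ ((a:ℝ) * s) * (j : ℝ) ^ ((a:ℝ) * s) := by
          push_cast
          rw [Real.mul_rpow (by norm_num) (Nat.cast_nonneg _)]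
        rw [h4, h5] at h3
        exact h3
      -- main chain
      have hKj : K ≤ (j : ℝ) ^ ((b : ℝ) - a * s) := hJ j hjJ
      have hsplit : (j : ℝ) ^ (b : ℕ) = (j : ℝ) ^ ((b : ℝ) - a * s) * (j : ℝ) ^ ((a:ℝ) * s) := by
        rw [← Real.rpow_add hjpos, sub_add_cancel, Real.rpow_natCast]
      have hfac1 : (1 : ℝ) ≤ (b.factorial : ℝ) := Nat.one_le_cast.mpr (Nat.factorial_pos b)
      have hKmul : c1 ^ b * K = 2 * R ^ a * (2 : ℝ) ^ ((a : ℝ) * s) := by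
        rw [hKdef]
        field_simp
      have hchain1 : 2 * R ^ a * ((D j : ℝ)) ^ s
          ≤ 2 * R ^ a * ((2 : ℝ) ^ ((a:ℝ) * s) * (j : ℝ) ^ ((a:ℝ) * s)) := by
        exact mul_le_mul_of_nonneg_left hDub (by positivity)
      have hjas : (0:ℝ) ≤ (j : ℝ) ^ ((a:ℝ) * s) := Real.rpow_nonneg (le_of_lt hjpos) _
      have hchain2 : 2 * R ^ a * ((2 : ℝ) ^ ((a:ℝ) * s) * (j : ℝ) ^ ((a:ℝ) * s))
          ≤ c1 ^ b * (j : ℝ) ^ (b : ℕ) := by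
        calc 2 * R ^ a * ((2 : ℝ) ^ ((a:ℝ) * s) * (j : ℝ) ^ ((a:ℝ) * s))
            = (c1 ^ b * K) * (j : ℝ) ^ ((a:ℝ) * s) := by rw [hKmul]; ring
          _ ≤ (c1 ^ b * (j : ℝ) ^ ((b : ℝ) - a * s)) * (j : ℝ) ^ ((a:ℝ) * s) := by
              have hc1b : (0:ℝ) ≤ c1 ^ b := by positivity
              exact mul_le_mul_of_nonneg_right (mul_le_mul_of_nonneg_left hKj hc1b) hjas
          _ = c1 ^ b * (j : ℝ) ^ (b : ℕ) := by rw [hsplit]; ring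
      have hchain3 : c1 ^ b * (j : ℝ) ^ (b : ℕ)
          ≤ (b.factorial : ℝ) * ∏ k ∈ Finset.range b, ‖q j k‖ := by
        have h2 : (0:ℝ) ≤ ∏ k ∈ Finset.range b, ‖q j k‖ :=
          Finset.prod_nonneg fun k _ => norm_nonneg _
        calc c1 ^ b * (j : ℝ) ^ (b : ℕ) = (c1 * j) ^ b := by rw [mul_pow]
          _ ≤ ∏ k ∈ Finset.range b, ‖q j k‖ := hplb
          _ ≤ (b.factorial : ℝ) * ∏ k ∈ Finset.range b, ‖q j k‖ :=
              le_mul_of_one_le_left h2 hfac1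
      linarith
    -- progression starting point
    set N : ℕ := j₀ + a * J' with hNdef
    have hNge : J' ≤ N := by
      have : J' ≤ a * J' := Nat.le_mul_of_pos_left J' ha
      omega
    set Φ : ℕ → ℝ := fun n => ‖co f 0 (N + a * n)‖ with hΦdef
    set U : ℕ → ℝ := fun n => C * R ^ (N + a * n) * (((N + a * n).factorial : ℝ)) ^ (s - 1)
      with hUdef
    have hΦpos : ∀ n, 0 < Φ n := by
      intro n
      have h1 : N + a * n = j₀ + a * (J' + n) := by rw [hNdef]; ring
      rw [hΦdef]
      simp only
      rw [h1]
      exact norm_pos_iff.mpr (hprog (J' + n))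
    have hΦU : ∀ n, Φ n ≤ U n := by
      intro n
      have := hG 0 (N + a * n)
      simpa using this
    have hUpos : ∀ n, 0 < U n := by
      intro n
      have := Real.rpow_pos_of_pos
        (show (0:ℝ) < ((N + a * n).factorial : ℝ) by exact_mod_cast Nat.factorial_pos _) (s - 1)
      positivity
    have hUstep : ∀ n, U (n + 1) = U n * (R ^ a * (D (N + a * n) : ℝ) ^ (s - 1)) := by
      intro n
      set j : ℕ := N + a * n with hjdef
      have hidx : N + a * (n + 1) = j + a := by rw [hjdef]; ring
      have hfact : ((j + a).factorial : ℝ) = (j.factorial : ℝ) * (D j : ℝ) := by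
        exact_mod_cast congrArg (Nat.cast (R := ℝ)) (hDmul j).symm
      rw [hUdef]
      simp only
      rw [hidx, hfact, Real.mul_rpow (Nat.cast_nonneg _) (Nat.cast_nonneg _), pow_add]
      ring
    have hΦstep : ∀ n, 2 * R ^ a * (D (N + a * n) : ℝ) ^ (s - 1) * Φ n ≤ Φ (n + 1) := by
      intro n
      set j : ℕ := N + a * n with hjdef
      have hjJ' : J' ≤ j := le_trans hNge (Nat.le_add_right _ _)
      have hDj : (0:ℝ) < (D j : ℝ) := by exact_mod_cast hDpos j
      have hidx : N + a * (n + 1) = j + a := by rw [hjdef]; ring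
      have hΦn1 : Φ (n + 1) = ‖co f 0 (j + a)‖ := by
        rw [hΦdef]; simp only; rw [hidx]
      have hΦn : Φ n = ‖co f 0 j‖ := rfl
      have h1 : (D j : ℝ) * (2 * R ^ a * (D j : ℝ) ^ (s - 1) * Φ n)
          ≤ (D j : ℝ) * Φ (n + 1) := by
        have hpow : (D j : ℝ) * (D j : ℝ) ^ (s - 1) = (D j : ℝ) ^ s := by
          rw [show (D j : ℝ) * (D j : ℝ) ^ (s - 1) = (D j : ℝ) ^ (1:ℝ) * (D j : ℝ) ^ (s - 1) by
            rw [Real.rpow_one], ← Real.rpow_add hDj]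
          ring_nf
        have heq : (D j : ℝ) * Φ (n + 1)
            = (b.factorial : ℝ) * (∏ k ∈ Finset.range b, ‖q j k‖) * Φ n := by
          rw [hΦn1, hΦn]; exact habs j
        rw [heq]
        have h2 := hstep2 j hjJ'
        have hΦnn : 0 ≤ Φ n := norm_nonneg _
        calc (D j : ℝ) * (2 * R ^ a * (D j : ℝ) ^ (s - 1) * Φ n)
            = (2 * R ^ a * (D j : ℝ) ^ s) * Φ n := by rw [← hpow]; ring
          _ ≤ ((b.factorial : ℝ) * ∏ k ∈ Finset.range b, ‖q j k‖) * Φ n :=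
              mul_le_mul_of_nonneg_right h2 hΦnn
          _ = (b.factorial : ℝ) * (∏ k ∈ Finset.range b, ‖q j k‖) * Φ n := by ring
      exact le_of_mul_le_mul_left h1 hDj
    -- main induction
    have hmain : ∀ n, 2 ^ n * Φ 0 * U n ≤ Φ n * U 0 := by
      intro n
      induction n with
      | zero => simp
      | succ m ih =>
          have hD0 : (0:ℝ) ≤ (D (N + a * m) : ℝ) ^ (s - 1) :=
            Real.rpow_nonneg (Nat.cast_nonneg _) _
          have hR0 : (0:ℝ) ≤ R ^ a := by positivity
          have hU0 : (0:ℝ) < U 0 := hUpos 0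
          have h1 : 2 ^ (m + 1) * Φ 0 * U (m + 1)
              = (2 * R ^ a * (D (N + a * m) : ℝ) ^ (s - 1)) * (2 ^ m * Φ 0 * U m) := by
            rw [hUstep m]; ring
          have h2 : (2 * R ^ a * (D (N + a * m) : ℝ) ^ (s - 1)) * (2 ^ m * Φ 0 * U m)
              ≤ (2 * R ^ a * (D (N + a * m) : ℝ) ^ (s - 1)) * (Φ m * U 0) := by
            apply mul_le_mul_of_nonneg_left ih
            positivity
          have h3 : (2 * R ^ a * (D (N + a * m) : ℝ) ^ (s - 1)) * (Φ m * U 0)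
              ≤ Φ (m + 1) * U 0 := by
            have := mul_le_mul_of_nonneg_right (hΦstep m) (le_of_lt hU0)
            calc (2 * R ^ a * (D (N + a * m) : ℝ) ^ (s - 1)) * (Φ m * U 0)
                = (2 * R ^ a * (D (N + a * m) : ℝ) ^ (s - 1) * Φ m) * U 0 := by ring
              _ ≤ Φ (m + 1) * U 0 := this
          rw [h1]
          exact le_trans h2 h3
    -- contradiction
    obtain ⟨n, hn⟩ := pow_unbounded_of_one_lt (U 0 / Φ 0) (one_lt_two (α := ℝ))
    have hlt : U 0 < 2 ^ n * Φ 0 := by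
      rw [div_lt_iff₀ (hΦpos 0)] at hn
      linarith
    have h1 := hmain n
    have h2 := hΦU n
    nlinarith [hUpos n, hΦpos 0, hΦpos n, hUpos 0]
  -- conclude f = 0
  have hall : ∀ i j, co f i j = 0 := by
    intro i j
    rw [hprod j i, hzero0 j, zero_mul]
  ext d
  rw [fin2_decomp d]
  have := hall (d 0) (d 1)
  unfold co at this
  simpa using this

end
end

section
/- Let a and b be coprime integers with 0 < a < b, β ∈ ℂ, and ε ∈ ℂ with ε ≠ 0. Every f ∈ ℂ[[t₁,x₂]] with P f = 0 and E_p f = 0 is Gevrey of order b/a, i.e. there exist C, R > 0 with |f_{(i,j)}| ≤ C·R^{i+j}·(j!)^{b/a − 1} for all i, j. Consequently, for every real s ≥ b/a, the ℂ-vector space of Gevrey-order-s solutions {f Gevrey of order s : P f = E_p f = 0} has dimension a. -/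
noncomputable section

lemma co_add (f g : M2) (i j : ℕ) : co (f + g) i j = co f i j + co g i j := by simp [co]

lemma co_smul (c : ℂ) (f : M2) (i j : ℕ) : co (c • f) i j = c * co f i j := by simp [co]

lemma co_zero (i j : ℕ) : co (0 : M2) i j = 0 := by simp [co]

lemma gevreyFn_zero {s : ℝ} : GevreyFn s fun _ _ => (0 : ℂ) :=
  ⟨1, 1, one_pos, one_pos, by intro i j; simp; positivity⟩

lemma gevreyFn_add {s : ℝ} {F G : ℕ → ℕ → ℂ} (hF : GevreyFn s F) (hG : GevreyFn s G) :
    GevreyFn s fun i j => F i j + G i j := by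
  obtain ⟨C, R, hC, hR, h⟩ := hF
  obtain ⟨C', R', hC', hR', h'⟩ := hG
  refine ⟨C + C', max R R', by positivity, lt_of_lt_of_le hR (le_max_left _ _), fun i j => ?_⟩
  have h1 := h i j
  have h2 := h' i j
  have hRm : R ^ (i + j) ≤ (max R R') ^ (i + j) := pow_le_pow_left₀ hR.le (le_max_left _ _) _
  have hRm' : R' ^ (i + j) ≤ (max R R') ^ (i + j) := pow_le_pow_left₀ hR'.le (le_max_right _ _) _
  have hfac : (0 : ℝ) ≤ (j.factorial : ℝ) ^ (s - 1) := by positivity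
  calc ‖F i j + G i j‖ ≤ ‖F i j‖ + ‖G i j‖ :=
        norm_add_le _ _
    _ ≤ C * R ^ (i + j) * (j.factorial : ℝ) ^ (s - 1)
        + C' * R' ^ (i + j) * (j.factorial : ℝ) ^ (s - 1) := add_le_add h1 h2
    _ ≤ C * (max R R') ^ (i + j) * (j.factorial : ℝ) ^ (s - 1)
        + C' * (max R R') ^ (i + j) * (j.factorial : ℝ) ^ (s - 1) := by gcongr
    _ = (C + C') * (max R R') ^ (i + j) * (j.factorial : ℝ) ^ (s - 1) := by ring

lemma gevreyFn_smul {s : ℝ} (c : ℂ) {F : ℕ → ℕ → ℂ} (hF : GevreyFn s F) :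
    GevreyFn s fun i j => c * F i j := by
  obtain ⟨C, R, hC, hR, h⟩ := hF
  refine ⟨(‖c‖ + 1) * C, R, by positivity, hR, fun i j => ?_⟩
  have h1 := h i j
  calc ‖c * F i j‖ = ‖c‖ * ‖F i j‖ := by simp [map_mul]
    _ ≤ (‖c‖ + 1) * (C * R ^ (i + j) * (j.factorial : ℝ) ^ (s - 1)) := by
        apply mul_le_mul (by linarith) h1 (norm_nonneg _) (by positivity)
    _ = (‖c‖ + 1) * C * R ^ (i + j) * (j.factorial : ℝ) ^ (s - 1) := by ring

lemma gevreyFn_co_add {s : ℝ} {f g : M2} (hf : GevreyFn s (co f)) (hg : GevreyFn s (co g)) :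
    GevreyFn s (co (f + g)) := by
  have : co (f + g) = fun i j => co f i j + co g i j := by funext i j; exact co_add f g i j
  rw [this]; exact gevreyFn_add hf hg

lemma gevreyFn_co_smul {s : ℝ} (c : ℂ) {f : M2} (hf : GevreyFn s (co f)) :
    GevreyFn s (co (c • f)) := by
  have : co (c • f) = fun i j => c * co f i j := by funext i j; exact co_smul c f i j
  rw [this]; exact gevreyFn_smul c hf

lemma gevreyFn_co_zero {s : ℝ} : GevreyFn s (co (0 : M2)) := by
  have : co (0 : M2) = fun _ _ => (0 : ℂ) := by funext i j; exact co_zero i j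
  rw [this]; exact gevreyFn_zero

lemma pco_add (a b : ℕ) (f g : M2) (i j : ℕ) :
    Pco a b (f + g) i j = Pco a b f i j + Pco a b g i j := by
  simp only [Pco, co_add]; ring

lemma pco_smul (a b : ℕ) (c : ℂ) (f : M2) (i j : ℕ) :
    Pco a b (c • f) i j = c * Pco a b f i j := by
  simp only [Pco, co_smul]; ring

lemma pco_zero (a b : ℕ) (i j : ℕ) : Pco a b (0 : M2) i j = 0 := by
  simp [Pco, co_zero]

lemma eco_add (a b : ℕ) (β : ℂ) (f g : M2) (i j : ℕ) :
    Eco a b β (f + g) i j = Eco a b β f i j + Eco a b β g i j := by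
  simp only [Eco, co_add]; ring

lemma eco_smul (a b : ℕ) (β : ℂ) (c : ℂ) (f : M2) (i j : ℕ) :
    Eco a b β (c • f) i j = c * Eco a b β f i j := by
  simp only [Eco, co_smul]; ring

lemma eco_zero (a b : ℕ) (β : ℂ) (i j : ℕ) : Eco a b β (0 : M2) i j = 0 := by
  simp [Eco, co_zero]

lemma epco_add (a b : ℕ) (β ε : ℂ) (f g : M2) (i j : ℕ) :
    Epco a b β ε (f + g) i j = Epco a b β ε f i j + Epco a b β ε g i j := by
  simp only [Epco, co_add]; ring

lemma epco_smul (a b : ℕ) (β ε : ℂ) (c : ℂ) (f : M2) (i j : ℕ) :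
    Epco a b β ε (c • f) i j = c * Epco a b β ε f i j := by
  simp only [Epco, co_smul]; ring

lemma epco_zero (a b : ℕ) (β ε : ℂ) (i j : ℕ) : Epco a b β ε (0 : M2) i j = 0 := by
  simp [Epco, co_zero]

/-- The space of Gevrey-order-`s` solutions of the hypergeometric system at `p = (ε,0)`. -/
def GSolP (a b : ℕ) (β ε : ℂ) (s : ℝ) : Submodule ℂ M2 where
  carrier := {f | GevreyFn s (co f) ∧ (∀ i j : ℕ, Pco a b f i j = 0) ∧
    ∀ i j : ℕ, Epco a b β ε f i j = 0}
  add_mem' := by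
    rintro f g ⟨hf0, hf1, hf2⟩ ⟨hg0, hg1, hg2⟩
    exact ⟨gevreyFn_co_add hf0 hg0,
      fun i j => by rw [pco_add, hf1 i j, hg1 i j, add_zero],
      fun i j => by rw [epco_add, hf2 i j, hg2 i j, add_zero]⟩
  zero_mem' := ⟨gevreyFn_co_zero, fun i j => pco_zero a b i j, fun i j => epco_zero a b β ε i j⟩
  smul_mem' := by
    rintro c f ⟨hf0, hf1, hf2⟩
    exact ⟨gevreyFn_co_smul c hf0,
      fun i j => by rw [pco_smul, hf1 i j, mul_zero],
      fun i j => by rw [epco_smul, hf2 i j, mul_zero]⟩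

namespace HGAux

open Finset

lemma cast_fact_div (m n : ℕ) (h : m ≤ n) :
    ((n.factorial / m.factorial : ℕ) : ℂ) = (n.factorial : ℂ) / (m.factorial : ℂ) :=
  Nat.cast_div (Nat.factorial_dvd_factorial h) (by exact_mod_cast (Nat.factorial_pos m).ne')

lemma fact_ratio_pow_le (j a : ℕ) : (j+1)^a * j.factorial ≤ (j+a).factorial := by
  induction a with
  | zero => simp
  | succ a ih =>
    calc (j+1)^(a+1) * j.factorial = (j+1) * ((j+1)^a * j.factorial) := by ring
    _ ≤ (j+1) * (j+a).factorial := Nat.mul_le_mul_left _ ih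
    _ ≤ (j+a+1) * (j+a).factorial := Nat.mul_le_mul_right _ (by omega)
    _ = (j+a+1).factorial := (Nat.factorial_succ _).symm

lemma pow_le_fact_div (j a : ℕ) : (j+1)^a ≤ (j+a).factorial / j.factorial :=
  (Nat.le_div_iff_mul_le (Nat.factorial_pos j)).mpr (fact_ratio_pow_le j a)

lemma E_rec {a b : ℕ} {β ε : ℂ} {f : M2} (hE : ∀ i j, Epco a b β ε f i j = 0) (i j : ℕ) :
    (a : ℂ) * ε * ((i:ℂ)+1) * co f (i+1) j = (β - ((a*i + b*j : ℕ):ℂ)) * co f i j := by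
  have h := hE i j
  unfold Epco at h
  linear_combination h

lemma aeps_ne {a : ℕ} {ε : ℂ} (ha : 0 < a) (hε : ε ≠ 0) (i : ℕ) :
    (a:ℂ) * ε * ((i:ℂ)+1) ≠ 0 :=
  mul_ne_zero (mul_ne_zero (Nat.cast_ne_zero.mpr ha.ne') hε) (Nat.cast_add_one_ne_zero i)

lemma zero_col {a b : ℕ} {β ε : ℂ} (ha : 0 < a) (hε : ε ≠ 0) {f : M2}
    (hE : ∀ i j, Epco a b β ε f i j = 0) {j : ℕ} (h0 : co f 0 j = 0) : ∀ i, co f i j = 0 := by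
  intro i
  induction i with
  | zero => exact h0
  | succ i ih =>
    have h := E_rec hE i j
    rw [ih, mul_zero] at h
    exact (mul_eq_zero.mp h).resolve_left (aeps_ne ha hε i)

lemma P_zero {a b : ℕ} {f : M2} (hP : ∀ i j, Pco a b f i j = 0) (j : ℕ) :
    (b.factorial : ℂ) * co f b j
      = (((j+a).factorial / j.factorial : ℕ) : ℂ) * co f 0 (j+a) := by
  have h := hP 0 j
  unfold Pco at h
  rw [sub_eq_zero] at h
  simpa using h

lemma fin2_decomp (d : Fin 2 →₀ ℕ) :
    d = Finsupp.single 0 (d 0) + Finsupp.single 1 (d 1) := by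
  ext k; fin_cases k <;> simp

end HGAux
namespace HGAux

lemma gevrey_of_sol (a b : ℕ) (ha : 0 < a) (haltb : a < b) (β ε : ℂ) (hε : ε ≠ 0)
    (f : M2) (hP : ∀ i j, Pco a b f i j = 0) (hE : ∀ i j, Epco a b β ε f i j = 0) :
    GevreyFn ((b : ℝ) / (a : ℝ)) (co f) := by
  obtain ⟨c, hc, hc0⟩ : ∃ c, b = a + c ∧ 0 < c := ⟨b - a, by omega, by omega⟩
  set B : ℝ := ‖β‖ with hBdef
  have hB0 : 0 ≤ B := norm_nonneg β
  set A : ℝ := (a:ℝ) * ‖ε‖ with hAdef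
  have hA0 : 0 < A := mul_pos (by exact_mod_cast ha) (norm_pos_iff.mpr hε)
  set M : ℕ → ℝ := fun j => ‖co f 0 j‖ with hMdef
  have hM0 : ∀ j, 0 ≤ M j := fun j => norm_nonneg _
  -- Step 1: horizontal bound from the Euler recursion
  have ibound : ∀ i j : ℕ, ‖co f i j‖ * A^i * (i.factorial : ℝ)
      ≤ ((a:ℝ)*i + (b:ℝ)*j + B)^i * M j := by
    intro i j
    induction i with
    | zero => simp [hMdef]
    | succ i ih =>
      have hrec := E_rec hE i j
      have habs : A * ((i:ℝ)+1) * ‖co f (i+1) j‖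
          ≤ ((a:ℝ)*i + (b:ℝ)*j + B) * ‖co f i j‖ := by
        have h1 := congrArg (‖·‖) hrec
        rw [norm_mul, norm_mul, norm_mul, norm_mul] at h1
        have e1 : ‖(a:ℂ)‖ = (a:ℝ) := Complex.norm_natCast a
        have e2 : ‖(i:ℂ)+1‖ = (i:ℝ)+1 := by
          rw [show ((i:ℂ)+1) = (((i+1:ℕ)):ℂ) by push_cast; ring, Complex.norm_natCast]
          push_cast; ring
        have e3 : ‖β - ((a*i + b*j : ℕ):ℂ)‖ ≤ (a:ℝ)*i + (b:ℝ)*j + B := by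
          calc ‖β - ((a*i + b*j : ℕ):ℂ)‖ ≤ ‖β‖ + ‖((a*i + b*j : ℕ):ℂ)‖ := norm_sub_le _ _
            _ = B + ((a*i+b*j : ℕ):ℝ) := by
                rw [Complex.norm_natCast]
            _ = (a:ℝ)*i + (b:ℝ)*j + B := by push_cast; ring
        calc A * ((i:ℝ)+1) * ‖co f (i+1) j‖
            = ‖(a:ℂ)‖ * ‖ε‖ * ‖(i:ℂ)+1‖
              * ‖co f (i+1) j‖ := by rw [e1, e2, hAdef]; try ring
          _ = ‖β - ((a*i + b*j : ℕ):ℂ)‖ * ‖co f i j‖ := h1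
          _ ≤ ((a:ℝ)*i + (b:ℝ)*j + B) * ‖co f i j‖ :=
              mul_le_mul_of_nonneg_right e3 (norm_nonneg _)
      have hmono : ((a:ℝ)*i + (b:ℝ)*j + B) ≤ ((a:ℝ)*(i+1) + (b:ℝ)*j + B) := by
        have : (0:ℝ) ≤ (a:ℝ) := by positivity
        push_cast; linarith
      have hX0 : (0:ℝ) ≤ (a:ℝ)*i + (b:ℝ)*j + B := by positivity
      calc ‖co f (i+1) j‖ * A^(i+1) * ((i+1).factorial : ℝ)
          = (A * ((i:ℝ)+1) * ‖co f (i+1) j‖) * A^i * (i.factorial : ℝ) := by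
            rw [Nat.factorial_succ]; push_cast; ring
        _ ≤ (((a:ℝ)*i + (b:ℝ)*j + B) * ‖co f i j‖) * A^i * (i.factorial : ℝ) := by
            have hnn : (0:ℝ) ≤ A^i * (i.factorial : ℝ) := by positivity
            have := mul_le_mul_of_nonneg_right habs hnn
            calc A * ((i:ℝ)+1) * ‖co f (i+1) j‖ * A^i * (i.factorial:ℝ)
                = A * ((i:ℝ)+1) * ‖co f (i+1) j‖ * (A^i * (i.factorial:ℝ)) := by ring
              _ ≤ ((a:ℝ)*i + (b:ℝ)*j + B) * ‖co f i j‖ * (A^i * (i.factorial:ℝ)) := this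
              _ = ((a:ℝ)*i + (b:ℝ)*j + B) * ‖co f i j‖ * A^i * (i.factorial:ℝ) := by ring
        _ = ((a:ℝ)*i + (b:ℝ)*j + B) * (‖co f i j‖ * A^i * (i.factorial:ℝ)) := by ring
        _ ≤ ((a:ℝ)*i + (b:ℝ)*j + B) * (((a:ℝ)*i + (b:ℝ)*j + B)^i * M j) :=
            mul_le_mul_of_nonneg_left ih hX0
        _ ≤ ((a:ℝ)*(i+1) + (b:ℝ)*j + B) * (((a:ℝ)*(i+1) + (b:ℝ)*j + B)^i * M j) := by
            have hX0' : (0:ℝ) ≤ (a:ℝ)*(i+1) + (b:ℝ)*j + B := by positivity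
            gcongr
        _ = ((a:ℝ)*(i+1) + (b:ℝ)*j + B)^(i+1) * M j := by
            rw [pow_succ]; push_cast; ring
        _ = ((a:ℝ)*((i+1 : ℕ):ℝ) + (b:ℝ)*j + B)^(i+1) * M j := by push_cast; ring
  -- Step 2: vertical recursion bound
  set K : ℝ := ((a:ℝ)*b + b + B) / A with hKdef
  have hK0 : 0 ≤ K := div_nonneg (by positivity) hA0.le
  have star : ∀ j : ℕ, ((j:ℝ)+1)^a * M (j+a) ≤ K^b * ((j:ℝ)+1)^b * M j := by
    intro j
    have hp0 := P_zero hP j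
    have habs : (b.factorial:ℝ) * ‖co f b j‖
        = (((j+a).factorial / j.factorial : ℕ):ℝ) * M (j+a) := by
      have h := congrArg (‖·‖) hp0
      rw [norm_mul, norm_mul] at h
      simpa [Complex.norm_natCast] using h
    have hratio : ((j:ℝ)+1)^a ≤ (((j+a).factorial / j.factorial : ℕ):ℝ) := by
      have h := pow_le_fact_div j a
      have : (((j+1)^a : ℕ):ℝ) ≤ (((j+a).factorial / j.factorial : ℕ):ℝ) := by exact_mod_cast h
      calc ((j:ℝ)+1)^a = (((j+1)^a : ℕ):ℝ) := by push_cast; ring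
        _ ≤ _ := this
    have hX : (a:ℝ)*b + (b:ℝ)*j + B ≤ (K * A) * ((j:ℝ)+1) := by
      have hKA : K * A = (a:ℝ)*b + b + B := div_mul_cancel₀ _ hA0.ne'
      rw [hKA]
      have h1 : (0:ℝ) ≤ (a:ℝ)*b := by positivity
      have h2 : (0:ℝ) ≤ (b:ℝ) := by positivity
      have h3 : (0:ℝ) ≤ (j:ℝ) := by positivity
      nlinarith [mul_nonneg h1 h3, mul_nonneg hB0 h3]
    have hX0 : (0:ℝ) ≤ (a:ℝ)*b + (b:ℝ)*j + B := by positivity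
    have h2 : (b.factorial:ℝ) * ‖co f b j‖ * A^b
        ≤ K^b * ((j:ℝ)+1)^b * M j * A^b := by
      calc (b.factorial:ℝ) * ‖co f b j‖ * A^b
          = ‖co f b j‖ * A^b * (b.factorial:ℝ) := by ring
        _ ≤ ((a:ℝ)*b + (b:ℝ)*j + B)^b * M j := ibound b j
        _ ≤ ((K*A) * ((j:ℝ)+1))^b * M j := by
            exact mul_le_mul_of_nonneg_right (pow_le_pow_left₀ hX0 hX b) (hM0 j)
        _ = K^b * ((j:ℝ)+1)^b * M j * A^b := by rw [mul_pow, mul_pow]; ring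
    have h3 : (b.factorial:ℝ) * ‖co f b j‖ ≤ K^b * ((j:ℝ)+1)^b * M j :=
      le_of_mul_le_mul_right h2 (by positivity)
    calc ((j:ℝ)+1)^a * M (j+a) ≤ (((j+a).factorial / j.factorial : ℕ):ℝ) * M (j+a) :=
          mul_le_mul_of_nonneg_right hratio (hM0 _)
      _ = (b.factorial:ℝ) * ‖co f b j‖ := habs.symm
      _ ≤ K^b * ((j:ℝ)+1)^b * M j := h3
  set N : ℕ → ℝ := fun j => (M j)^a with hNdef
  have hN0 : ∀ j, 0 ≤ N j := fun j => by positivity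
  have stepN : ∀ j : ℕ, N (j+a) ≤ K^(a*b) * ((j:ℝ)+1)^(a*c) * N j := by
    intro j
    have h := pow_le_pow_left₀ (by positivity) (star j) a
    have hL : (((j:ℝ)+1)^a * M (j+a))^a = ((j:ℝ)+1)^(a*a) * N (j+a) := by
      rw [mul_pow, ← pow_mul]
    have hR : (K^b * ((j:ℝ)+1)^b * M j)^a
        = K^(a*b) * ((j:ℝ)+1)^(a*b) * N j := by
      rw [mul_pow, mul_pow, ← pow_mul, ← pow_mul, Nat.mul_comm b a]
    rw [hL, hR] at h
    have hp : (0:ℝ) < ((j:ℝ)+1)^(a*a) := by positivity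
    rw [← mul_le_mul_iff_left₀ hp]
    calc N (j+a) * ((j:ℝ)+1)^(a*a) = ((j:ℝ)+1)^(a*a) * N (j+a) := by ring
      _ ≤ K^(a*b) * ((j:ℝ)+1)^(a*b) * N j := h
      _ = K^(a*b) * ((j:ℝ)+1)^(a*c) * N j * ((j:ℝ)+1)^(a*a) := by
          rw [show a*b = a*c + a*a from by rw [hc]; ring]
          rw [pow_add]; ring
  set R₁ : ℝ := (max K 1)^b with hR₁def
  have hR₁1 : (1:ℝ) ≤ R₁ := one_le_pow₀ (le_max_right K 1)
  set C₀ : ℝ := 1 + ∑ k ∈ Finset.range a, N k with hC₀def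
  have hSnn : (0:ℝ) ≤ ∑ k ∈ Finset.range a, N k := Finset.sum_nonneg fun k _ => hN0 k
  have hC₀1 : (1:ℝ) ≤ C₀ := by rw [hC₀def]; linarith
  have hC₀0 : (0:ℝ) < C₀ := by linarith
  have claim : ∀ j, N j ≤ C₀ * R₁^j * ((j.factorial:ℝ))^c := by
    intro j
    induction j using Nat.strong_induction_on with
    | _ j ih =>
      by_cases hj : j < a
      · have h1 : N j ≤ C₀ := by
          have h2 : N j ≤ ∑ k ∈ Finset.range a, N k :=
            Finset.single_le_sum (fun k _ => hN0 k) (Finset.mem_range.mpr hj)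
          rw [hC₀def]; linarith
        have f1 : (1:ℝ) ≤ R₁^j := one_le_pow₀ hR₁1
        have f2 : (1:ℝ) ≤ ((j.factorial:ℝ))^c := by
          have : (1:ℝ) ≤ (j.factorial:ℝ) := Nat.one_le_cast.mpr (Nat.factorial_pos j)
          exact one_le_pow₀ this
        calc N j ≤ C₀ := h1
          _ ≤ C₀ * R₁^j := le_mul_of_one_le_right (by linarith) f1
          _ ≤ C₀ * R₁^j * ((j.factorial:ℝ))^c :=
            le_mul_of_one_le_right (mul_nonneg (by linarith) (by positivity)) f2
      · push_neg at hj
        obtain ⟨k, hk⟩ : ∃ k, j = k + a := ⟨j - a, by omega⟩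
        subst hk
        have ihk := ih k (by omega)
        have hKR : K^(a*b) ≤ R₁^a := by
          rw [hR₁def, ← pow_mul, Nat.mul_comm b a]
          exact pow_le_pow_left₀ hK0 (le_max_left K 1) _
        have hfa : ((k:ℝ)+1)^(a*c) * ((k.factorial:ℝ))^c ≤ (((k+a).factorial:ℝ))^c := by
          have h1 : (((k+1)^a * k.factorial : ℕ):ℝ) ≤ (((k+a).factorial : ℕ):ℝ) := by
            exact_mod_cast fact_ratio_pow_le k a
          calc ((k:ℝ)+1)^(a*c) * ((k.factorial:ℝ))^c
              = ((((k+1)^a * k.factorial : ℕ)):ℝ)^c := by push_cast; rw [pow_mul]; ring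
            _ ≤ (((k+a).factorial:ℝ))^c := pow_le_pow_left₀ (by positivity) h1 c
        calc N (k+a) ≤ K^(a*b) * ((k:ℝ)+1)^(a*c) * N k := stepN k
          _ ≤ K^(a*b) * ((k:ℝ)+1)^(a*c) * (C₀ * R₁^k * ((k.factorial:ℝ))^c) := by
              have : (0:ℝ) ≤ K^(a*b) * ((k:ℝ)+1)^(a*c) := by positivity
              exact mul_le_mul_of_nonneg_left ihk this
          _ = C₀ * R₁^k * K^(a*b) * (((k:ℝ)+1)^(a*c) * ((k.factorial:ℝ))^c) := by ring
          _ ≤ C₀ * R₁^k * R₁^a * (((k+a).factorial:ℝ))^c := by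
              have h0 : (0:ℝ) ≤ C₀ * R₁^k :=
                mul_nonneg (by linarith) (pow_nonneg (by linarith) k)
              exact mul_le_mul (mul_le_mul_of_nonneg_left hKR h0) hfa
                (mul_nonneg (pow_nonneg (by positivity) _) (pow_nonneg (by positivity) _))
                (mul_nonneg h0 (pow_nonneg (by linarith) a))
          _ = C₀ * R₁^(k+a) * (((k+a).factorial:ℝ))^c := by rw [pow_add]; ring
  -- Step 3: convert to a Gevrey bound for M via rpow
  have hane : ((a:ℝ)) ≠ 0 := by positivity
  have hexp : (b:ℝ)/(a:ℝ) - 1 = (c:ℝ) * ((1:ℝ)/a) := by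
    rw [hc]; push_cast; field_simp; ring
  have Mbound : ∀ j, M j ≤ C₀^((1:ℝ)/a) * (R₁^((1:ℝ)/a))^j
      * ((j.factorial:ℝ))^((b:ℝ)/(a:ℝ) - 1) := by
    intro j
    have hMN : M j = (N j)^((1:ℝ)/a) := by
      rw [hNdef]
      simp only
      rw [← Real.rpow_natCast (M j) a, ← Real.rpow_mul (hM0 j)]
      rw [mul_one_div, div_self hane, Real.rpow_one]
    have h1 : (N j)^((1:ℝ)/a) ≤ (C₀ * R₁^j * ((j.factorial:ℝ))^c)^((1:ℝ)/a) :=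
      Real.rpow_le_rpow (hN0 j) (claim j) (by positivity)
    have h2 : (C₀ * R₁^j * ((j.factorial:ℝ))^c)^((1:ℝ)/a)
        = C₀^((1:ℝ)/a) * (R₁^((1:ℝ)/a))^j * ((j.factorial:ℝ))^((b:ℝ)/(a:ℝ) - 1) := by
      rw [Real.mul_rpow (mul_nonneg (by linarith) (pow_nonneg (by linarith) j))
            (pow_nonneg (by positivity) c),
          Real.mul_rpow (by linarith : (0:ℝ) ≤ C₀) (pow_nonneg (by linarith) j)]
      congr 1
      · congr 1
        rw [← Real.rpow_natCast R₁ j, ← Real.rpow_mul (by linarith : (0:ℝ) ≤ R₁),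
            mul_comm ((j:ℝ)) ((1:ℝ)/a), Real.rpow_mul (by linarith : (0:ℝ) ≤ R₁),
            Real.rpow_natCast]
      · rw [← Real.rpow_natCast ((j.factorial:ℝ)) c,
            ← Real.rpow_mul (by positivity : (0:ℝ) ≤ (j.factorial:ℝ)), hexp]
    rw [hMN]
    rw [h2] at h1
    exact h1
  -- Step 4: assemble
  set X1 : ℝ := Real.exp a / A with hX1def
  set Y1 : ℝ := Real.exp b * R₁^((1:ℝ)/a) with hY1def
  have hX10 : 0 ≤ X1 := by positivity
  have hY10 : 0 ≤ Y1 :=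
    mul_nonneg (Real.exp_pos (b:ℝ)).le (Real.rpow_nonneg (by linarith) _)
  refine ⟨Real.exp B * C₀^((1:ℝ)/a), max (max X1 Y1) 1,
    mul_pos (Real.exp_pos B) (Real.rpow_pos_of_pos hC₀0 _),
    lt_of_lt_of_le one_pos (le_max_right _ _), fun i j => ?_⟩
  set R : ℝ := max (max X1 Y1) 1 with hRdef
  have hXR : X1 ≤ R := le_trans (le_max_left X1 Y1) (le_max_left _ _)
  have hYR : Y1 ≤ R := le_trans (le_max_right X1 Y1) (le_max_left _ _)
  have hfac0 : (0:ℝ) < (i.factorial : ℝ) := by exact_mod_cast Nat.factorial_pos i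
  have hX0 : (0:ℝ) ≤ (a:ℝ)*i + (b:ℝ)*j + B := by positivity
  have hXe : ((a:ℝ)*i + (b:ℝ)*j + B)^i ≤ Real.exp ((a:ℝ)*i + (b:ℝ)*j + B) * (i.factorial:ℝ) := by
    have h := Real.pow_div_factorial_le_exp (x := (a:ℝ)*i + (b:ℝ)*j + B) hX0 i
    rw [div_le_iff₀ hfac0] at h
    exact h
  have key : ‖co f i j‖ ≤ Real.exp ((a:ℝ)*i + (b:ℝ)*j + B) / A^i * M j := by
    rw [div_mul_eq_mul_div, le_div_iff₀ (by positivity : (0:ℝ) < A^i)]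
    rw [← mul_le_mul_iff_left₀ hfac0]
    calc ‖co f i j‖ * A^i * (i.factorial:ℝ)
        ≤ ((a:ℝ)*i + (b:ℝ)*j + B)^i * M j := ibound i j
      _ ≤ (Real.exp ((a:ℝ)*i + (b:ℝ)*j + B) * (i.factorial:ℝ)) * M j :=
          mul_le_mul_of_nonneg_right hXe (hM0 j)
      _ = Real.exp ((a:ℝ)*i + (b:ℝ)*j + B) * M j * (i.factorial:ℝ) := by ring
  have hsplit : Real.exp ((a:ℝ)*i + (b:ℝ)*j + B)
      = (Real.exp a)^i * (Real.exp b)^j * Real.exp B := by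
    rw [Real.exp_add, Real.exp_add]
    rw [mul_comm ((a:ℝ)) ((i:ℝ)), mul_comm ((b:ℝ)) ((j:ℝ))]
    rw [Real.exp_nat_mul, Real.exp_nat_mul]
  calc ‖co f i j‖
      ≤ Real.exp ((a:ℝ)*i + (b:ℝ)*j + B) / A^i * M j := key
    _ = Real.exp B * X1^i * (Real.exp b)^j * M j := by
        rw [hsplit, hX1def, div_pow]; ring
    _ ≤ Real.exp B * X1^i * (Real.exp b)^j *
        (C₀^((1:ℝ)/a) * (R₁^((1:ℝ)/a))^j * ((j.factorial:ℝ))^((b:ℝ)/(a:ℝ) - 1)) := by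
        have : (0:ℝ) ≤ Real.exp B * X1^i * (Real.exp b)^j := by positivity
        exact mul_le_mul_of_nonneg_left (Mbound j) this
    _ = (Real.exp B * C₀^((1:ℝ)/a)) * (X1^i * Y1^j) * ((j.factorial:ℝ))^((b:ℝ)/(a:ℝ) - 1) := by
        rw [hY1def, mul_pow]; ring
    _ ≤ (Real.exp B * C₀^((1:ℝ)/a)) * (R^i * R^j) * ((j.factorial:ℝ))^((b:ℝ)/(a:ℝ) - 1) := by
        have h1 : X1^i ≤ R^i := pow_le_pow_left₀ hX10 hXR i
        have h2 : Y1^j ≤ R^j := pow_le_pow_left₀ hY10 hYR j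
        have h3 : (0:ℝ) ≤ ((j.factorial:ℝ))^((b:ℝ)/(a:ℝ) - 1) := by positivity
        have h4 : X1^i * Y1^j ≤ R^i * R^j :=
          mul_le_mul h1 h2 (by positivity) (by positivity)
        have h5 : (0:ℝ) ≤ Real.exp B * C₀^((1:ℝ)/a) :=
          (mul_pos (Real.exp_pos B) (Real.rpow_pos_of_pos hC₀0 _)).le
        exact mul_le_mul_of_nonneg_right (mul_le_mul_of_nonneg_left h4 h5) h3
    _ = (Real.exp B * C₀^((1:ℝ)/a)) * R^(i+j) * ((j.factorial:ℝ))^((b:ℝ)/(a:ℝ) - 1) := by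
        rw [pow_add]

end HGAux
namespace HGAux

/-- One step of the first-variable recursion. -/
def stepC (a b : ℕ) (β ε : ℂ) (j k : ℕ) : ℂ :=
  (β - ((a*k + b*j : ℕ):ℂ)) / ((a:ℂ) * ε * ((k:ℂ)+1))

/-- The product of the first `i` recursion factors. -/
def cI (a b : ℕ) (β ε : ℂ) (j i : ℕ) : ℂ := ∏ k ∈ Finset.range i, stepC a b β ε j k

lemma cI_zero (a b : ℕ) (β ε : ℂ) (j : ℕ) : cI a b β ε j 0 = 1 := by
  simp [cI]

lemma cI_succ (a b : ℕ) (β ε : ℂ) (j i : ℕ) :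
    cI a b β ε j (i+1) = cI a b β ε j i * stepC a b β ε j i :=
  Finset.prod_range_succ _ _

/-- One step of the second-variable recursion. -/
def stepJ (a b : ℕ) (β ε : ℂ) (j : ℕ) : ℂ :=
  (b.factorial : ℂ) * cI a b β ε j b * (j.factorial : ℂ) / ((j+a).factorial : ℂ)

/-- Values on the initial strip, propagated along the second variable:
`g0 a b β ε v q r` is the value at `(0, a*q + r)`. -/
def g0 (a b : ℕ) (β ε : ℂ) (v : Fin a → ℂ) : ℕ → ℕ → ℂ
  | 0, r => if h : r < a then v ⟨r, h⟩ else 0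
  | q+1, r => stepJ a b β ε (a*q + r) * g0 a b β ε v q r

/-- The full coefficient family of the solution with initial data `v`. -/
def gg (a b : ℕ) (β ε : ℂ) (v : Fin a → ℂ) (i j : ℕ) : ℂ :=
  cI a b β ε j i * g0 a b β ε v (j / a) (j % a)

/-- The solution power series with initial data `v`. -/
def sol (a b : ℕ) (β ε : ℂ) (v : Fin a → ℂ) : M2 :=
  fun d => gg a b β ε v (d 0) (d 1)

lemma co_sol (a b : ℕ) (β ε : ℂ) (v : Fin a → ℂ) (i j : ℕ) :
    co (sol a b β ε v) i j = gg a b β ε v i j := by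
  simp [co, sol, MvPowerSeries.coeff_apply]

lemma gg_succ (a b : ℕ) (β ε : ℂ) (v : Fin a → ℂ) (i j : ℕ) :
    gg a b β ε v (i+1) j = stepC a b β ε j i * gg a b β ε v i j := by
  unfold gg
  rw [cI_succ]; ring

lemma gg_zero_add (a b : ℕ) (ha : 0 < a) (β ε : ℂ) (v : Fin a → ℂ) (j : ℕ) :
    gg a b β ε v 0 (j+a) = stepJ a b β ε j * gg a b β ε v 0 j := by
  unfold gg
  rw [cI_zero, cI_zero, Nat.add_div_right j ha, Nat.add_mod_right j a, one_mul, one_mul]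
  have h : g0 a b β ε v (j/a + 1) (j % a)
      = stepJ a b β ε (a*(j/a) + j % a) * g0 a b β ε v (j/a) (j % a) := rfl
  rw [h, Nat.div_add_mod j a]

lemma gg_eq (a b : ℕ) (β ε : ℂ) (v : Fin a → ℂ) (i j : ℕ) :
    gg a b β ε v i j = cI a b β ε j i * gg a b β ε v 0 j := by
  unfold gg
  rw [cI_zero]; ring

lemma sol_Ep (a b : ℕ) (ha : 0 < a) (β ε : ℂ) (hε : ε ≠ 0) (v : Fin a → ℂ) :
    ∀ i j, Epco a b β ε (sol a b β ε v) i j = 0 := by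
  intro i j
  unfold Epco
  rw [co_sol, co_sol, gg_succ]
  have hne := aeps_ne ha hε i
  unfold stepC
  have ha' : (a:ℂ) ≠ 0 := Nat.cast_ne_zero.mpr ha.ne'
  field_simp
  ring

/-- Cancellation helper. -/
lemma cancel1 {a : ℕ} {ε : ℂ} (ha : 0 < a) (hε : ε ≠ 0) (z w : ℂ) (hw : w ≠ 0) :
    w * (z / ((a:ℂ) * ε * w)) = z / ((a:ℂ) * ε) := by
  have ha' : (a:ℂ) ≠ 0 := Nat.cast_ne_zero.mpr ha.ne'
  field_simp

/-- The key combinatorial identity (multiplied-out form). -/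
lemma keyI' (a b : ℕ) (ha : 0 < a) (β ε : ℂ) (hε : ε ≠ 0) (j : ℕ) :
    ∀ i, ((i+b).factorial : ℂ) * cI a b β ε j (i+b)
      = (i.factorial : ℂ) * ((b.factorial : ℂ) * cI a b β ε j b * cI a b β ε (j+a) i) := by
  intro i
  induction i with
  | zero => rw [cI_zero]; simp
  | succ i ih =>
    have e1 : i+1+b = (i+b)+1 := by omega
    rw [e1, cI_succ, cI_succ, Nat.factorial_succ (i+b), Nat.factorial_succ i]
    have hnum : ((a*(i+b) + b*j : ℕ):ℂ) = ((a*i + b*(j+a) : ℕ):ℂ) := by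
      norm_cast; ring
    have hw1 : ((((i+b):ℕ):ℂ)+1) ≠ 0 := Nat.cast_add_one_ne_zero (i+b)
    have hw2 : (((i:ℕ):ℂ)+1) ≠ 0 := Nat.cast_add_one_ne_zero i
    have hs1 : stepC a b β ε j (i+b)
        = (β - ((a*i + b*(j+a) : ℕ):ℂ)) / ((a:ℂ) * ε * ((((i+b):ℕ):ℂ)+1)) := by
      rw [stepC, hnum]
    have hs2 : stepC a b β ε (j+a) i
        = (β - ((a*i + b*(j+a) : ℕ):ℂ)) / ((a:ℂ) * ε * (((i:ℕ):ℂ)+1)) := rfl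
    calc ((((i+b)+1) * (i+b).factorial : ℕ) : ℂ)
          * (cI a b β ε j (i+b) * stepC a b β ε j (i+b))
        = (((i+b).factorial : ℂ) * cI a b β ε j (i+b))
          * (((((i+b):ℕ):ℂ)+1) * stepC a b β ε j (i+b)) := by push_cast; ring
      _ = (((i+b).factorial : ℂ) * cI a b β ε j (i+b))
          * ((β - ((a*i + b*(j+a) : ℕ):ℂ)) / ((a:ℂ) * ε)) := by
            rw [hs1, cancel1 ha hε _ _ hw1]
      _ = ((i.factorial : ℂ) * ((b.factorial : ℂ) * cI a b β ε j b * cI a b β ε (j+a) i))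
          * ((β - ((a*i + b*(j+a) : ℕ):ℂ)) / ((a:ℂ) * ε)) := by rw [ih]
      _ = ((i.factorial : ℂ) * ((b.factorial : ℂ) * cI a b β ε j b * cI a b β ε (j+a) i))
          * ((((i:ℕ):ℂ)+1) * stepC a b β ε (j+a) i) := by
            rw [hs2, cancel1 ha hε _ _ hw2]
      _ = (((i+1) * i.factorial : ℕ) : ℂ)
          * ((b.factorial : ℂ) * cI a b β ε j b
            * (cI a b β ε (j+a) i * stepC a b β ε (j+a) i)) := by push_cast; ring

/-- The key combinatorial identity between the product factors. -/
lemma keyI (a b : ℕ) (ha : 0 < a) (hb : 0 < b) (β ε : ℂ) (hε : ε ≠ 0) (j : ℕ) :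
    ∀ i, (((i+b).factorial / i.factorial : ℕ):ℂ) * cI a b β ε j (i+b)
      = (b.factorial : ℂ) * cI a b β ε j b * cI a b β ε (j+a) i := by
  intro i
  have hfi : ((i.factorial : ℕ):ℂ) ≠ 0 := Nat.cast_ne_zero.mpr (Nat.factorial_pos i).ne'
  rw [cast_fact_div i (i+b) (Nat.le_add_right _ _), div_mul_eq_mul_div, keyI' a b ha β ε hε j i,
    mul_div_cancel_left₀ _ hfi]

lemma sol_P (a b : ℕ) (ha : 0 < a) (hb : 0 < b) (β ε : ℂ) (hε : ε ≠ 0) (v : Fin a → ℂ) :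
    ∀ i j, Pco a b (sol a b β ε v) i j = 0 := by
  intro i j
  unfold Pco
  rw [co_sol, co_sol, gg_eq a b β ε v (i+b) j, gg_eq a b β ε v i (j+a), gg_zero_add a b ha β ε v j]
  have h1 : (((i+b).factorial / i.factorial : ℕ):ℂ) * cI a b β ε j (i+b)
      = (b.factorial : ℂ) * cI a b β ε j b * cI a b β ε (j+a) i := keyI a b ha hb β ε hε j i
  have h2 : (((j+a).factorial / j.factorial : ℕ):ℂ) * stepJ a b β ε j
      = (b.factorial : ℂ) * cI a b β ε j b := by
    rw [cast_fact_div j (j+a) (Nat.le_add_right _ _)]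
    unfold stepJ
    have hfj : ((j.factorial : ℕ):ℂ) ≠ 0 := Nat.cast_ne_zero.mpr (Nat.factorial_pos _).ne'
    have hfja : (((j+a).factorial : ℕ):ℂ) ≠ 0 := Nat.cast_ne_zero.mpr (Nat.factorial_pos _).ne'
    field_simp
  calc (((i+b).factorial / i.factorial : ℕ):ℂ) * (cI a b β ε j (i+b) * gg a b β ε v 0 j)
      - (((j+a).factorial / j.factorial : ℕ):ℂ)
        * (cI a b β ε (j+a) i * (stepJ a b β ε j * gg a b β ε v 0 j))
      = ((((i+b).factorial / i.factorial : ℕ):ℂ) * cI a b β ε j (i+b)) * gg a b β ε v 0 j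
        - ((((j+a).factorial / j.factorial : ℕ):ℂ) * stepJ a b β ε j)
          * (cI a b β ε (j+a) i * gg a b β ε v 0 j) := by ring
    _ = 0 := by rw [h1, h2]; ring

lemma gevrey_mono {s t : ℝ} (hst : s ≤ t) {F : ℕ → ℕ → ℂ} (h : GevreyFn s F) : GevreyFn t F := by
  obtain ⟨C, R, hC, hR, hb⟩ := h
  refine ⟨C, R, hC, hR, fun i j => (hb i j).trans ?_⟩
  have h1 : (1:ℝ) ≤ (j.factorial:ℝ) := Nat.one_le_cast.mpr (Nat.factorial_pos j)
  have h2 : (j.factorial:ℝ) ^ (s-1) ≤ (j.factorial:ℝ) ^ (t-1) :=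
    Real.rpow_le_rpow_of_exponent_le h1 (by linarith)
  exact mul_le_mul_of_nonneg_left h2 (by positivity)

end HGAux
/-- Every formal power series solution of the hypergeometric system at `p = (ε,0)`, `ε ≠ 0`,
is Gevrey of order `b/a`; consequently, for every real `s ≥ b/a`, the space of Gevrey-order-`s`
solutions has dimension `a`. -/
theorem formal_solutions_are_gevrey_slope_and_dim
    (a b : ℕ) (hab : Nat.Coprime a b) (ha : 0 < a) (haltb : a < b)
    (β : ℂ) (ε : ℂ) (hε : ε ≠ 0) :
    (∀ f : M2, (∀ i j : ℕ, Pco a b f i j = 0) → (∀ i j : ℕ, Epco a b β ε f i j = 0) →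
      GevreyFn ((b : ℝ) / (a : ℝ)) (co f)) ∧
    ∀ s : ℝ, (b : ℝ) / (a : ℝ) ≤ s → Module.rank ℂ (GSolP a b β ε s) = a := by
  have hb : 0 < b := lt_trans ha haltb
  refine ⟨fun f hP hE => HGAux.gevrey_of_sol a b ha haltb β ε hε f hP hE, fun s hs => ?_⟩
  classical
  let φ : GSolP a b β ε s →ₗ[ℂ] (Fin a → ℂ) :=
    { toFun := fun f k => co f.1 0 k
      map_add' := by intro f g; funext k; exact co_add f.1 g.1 0 k
      map_smul' := by intro cc f; funext k; exact co_smul cc f.1 0 k }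
  have hmem : ∀ (g : M2), g ∈ GSolP a b β ε s ↔
      (GevreyFn s (co g) ∧ (∀ i j, Pco a b g i j = 0) ∧ ∀ i j, Epco a b β ε g i j = 0) :=
    fun g => Iff.rfl
  have hinj : Function.Injective φ := by
    rw [← LinearMap.ker_eq_bot, LinearMap.ker_eq_bot']
    intro f hf
    obtain ⟨hg, hPf, hEf⟩ := (hmem f.1).mp f.2
    have hzero0 : ∀ j, co f.1 0 j = 0 := by
      intro j
      induction j using Nat.strong_induction_on with
      | _ j ih =>
        by_cases hj : j < a
        · exact congrFun hf ⟨j, hj⟩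
        · push_neg at hj
          obtain ⟨k, hk⟩ : ∃ k, j = k + a := ⟨j - a, by omega⟩
          subst hk
          have hk0 : co f.1 0 k = 0 := ih k (by omega)
          have hcol := HGAux.zero_col ha hε hEf hk0
          have hp := HGAux.P_zero hPf k
          rw [hcol b, mul_zero] at hp
          have hr : (((k+a).factorial / k.factorial : ℕ):ℂ) ≠ 0 := by
            have h2 : 0 < (k+a).factorial / k.factorial :=
              Nat.div_pos (Nat.factorial_le (Nat.le_add_right _ _)) (Nat.factorial_pos k)
            exact_mod_cast h2.ne'
          exact (mul_eq_zero.mp hp.symm).resolve_left hr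
    have hzero : ∀ i j, co f.1 i j = 0 := fun i j =>
      HGAux.zero_col ha hε hEf (hzero0 j) i
    have hf1 : f.1 = 0 := by
      apply MvPowerSeries.ext
      intro d
      rw [map_zero, HGAux.fin2_decomp d]
      exact hzero (d 0) (d 1)
    exact Subtype.ext hf1
  have hsurj : Function.Surjective φ := by
    intro v
    have hPs := HGAux.sol_P a b ha hb β ε hε v
    have hEs := HGAux.sol_Ep a b ha β ε hε v
    have hGs : GevreyFn s (co (HGAux.sol a b β ε v)) :=
      HGAux.gevrey_mono hs (HGAux.gevrey_of_sol a b ha haltb β ε hε _ hPs hEs)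
    refine ⟨⟨HGAux.sol a b β ε v, (hmem _).mpr ⟨hGs, hPs, hEs⟩⟩, ?_⟩
    funext k
    show co (HGAux.sol a b β ε v) 0 (k : ℕ) = v k
    rw [HGAux.co_sol]
    have h1 : (k:ℕ) / a = 0 := Nat.div_eq_of_lt k.isLt
    have h2 : (k:ℕ) % a = (k:ℕ) := Nat.mod_eq_of_lt k.isLt
    show HGAux.cI a b β ε (k:ℕ) 0 * HGAux.g0 a b β ε v ((k:ℕ)/a) ((k:ℕ)%a) = v k
    rw [HGAux.cI_zero, one_mul, h1, h2]
    have h3 : HGAux.g0 a b β ε v 0 (k:ℕ)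
        = if h : (k:ℕ) < a then v ⟨(k:ℕ), h⟩ else 0 := rfl
    rw [h3, dif_pos k.isLt]
  have e := LinearEquiv.ofBijective φ ⟨hinj, hsurj⟩
  rw [e.rank_eq, rank_fin_fun]

end
end
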